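/- arXiv:1905.13303 — 6 statements merged into one kernel-verified Lean document; each statement's English description precedes it below -/
import Mathlib

section
/- Separation lemma (Lemma 6.8): Let k be a field of characteristic 0, g ≥ 1, let Y ∈ (M_s(k))^g be a semisimple point and let Z ∈ (M_s(k))^g be a tuple that does not belong to [M_s(k),Y]. Then there exists f ∈ k⟨x_1,…,x_g⟩ such that f(Y) = 0 while f evaluated at the tuple of 2s×2s block matrices (( Y_j , Z_j ; 0 , Y_j ))_{j=1}^g is nonzero. -/
namespace NCPaper

variable {k : Type*} [Field k]

/-- Square matrices of size `s` over `k`. -/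
abbrev Mat (k : Type*) (s : ℕ) := Matrix (Fin s) (Fin s) k

/-- `g`-tuples of square matrices of size `s` over `k`, i.e. points of the nc space. -/
abbrev Tup (k : Type*) (s g : ℕ) := Fin g → Mat k s

variable {s g : ℕ}

/-- Componentwise left multiplication `S·Z = (S Z₁, …, S Z_g)`. -/
def lmul (S : Mat k s) (Z : Tup k s g) : Tup k s g := fun j => S * Z j

/-- Componentwise right multiplication `Z·S = (Z₁ S, …, Z_g S)`. -/
def rmul (Z : Tup k s g) (S : Mat k s) : Tup k s g := fun j => Z j * S

/-- The commutator tuple `[S,Y] = ([S,Y₁], …, [S,Y_g])`. -/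
def brkt (S : Mat k s) (Y : Tup k s g) : Tup k s g := fun j => S * Y j - Y j * S

/-- A point `Y` is semisimple if every subspace invariant under all `Y_j` admits a
complementary invariant subspace. -/
def IsSemisimplePt (Y : Tup k s g) : Prop :=
  ∀ W : Submodule k (Fin s → k), (∀ j, ∀ v ∈ W, (Y j).mulVec v ∈ W) →
    ∃ W' : Submodule k (Fin s → k), (∀ j, ∀ v ∈ W', (Y j).mulVec v ∈ W') ∧ IsCompl W W'

/-- `c` belongs to the centralizer `C(Y)` of `Y` in `M_s(k)`. -/
def Centralizes (Y : Tup k s g) (c : Mat k s) : Prop := ∀ j, c * Y j = Y j * c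

/-- The `(ℓ+1) × (ℓ+1)` block upper bidiagonal matrix tuple `B(Y; Z¹, …, Z^ℓ)` with `Y`
on the diagonal blocks and `Zⁱ` on the superdiagonal blocks. -/
def Bmat (Y : Tup k s g) {ℓ : ℕ} (Z : Fin ℓ → Tup k s g) (j : Fin g) :
    Matrix (Fin (ℓ + 1) × Fin s) (Fin (ℓ + 1) × Fin s) k := fun p q =>
  if p.1 = q.1 then Y j p.2 q.2
  else if h : (p.1 : ℕ) + 1 = (q.1 : ℕ) then
    Z ⟨(p.1 : ℕ), by have := q.1.isLt; omega⟩ j p.2 q.2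
  else 0

/-- The `ℓ`-th order nc differential operator of `F` at `Y`: the top-right `s × s` block of
`F(B(Y; Z¹, …, Z^ℓ))`.  For `ℓ = 0` this is `F(Y)`. -/
noncomputable def Delta (Y : Tup k s g) (ℓ : ℕ) (F : FreeAlgebra k (Fin g))
    (Z : Fin ℓ → Tup k s g) : Mat k s := fun a b =>
  (FreeAlgebra.lift k (Bmat Y Z)) F (0, a) (Fin.last ℓ, b)

/-- The linearly admissible condition relating a `(m+1)`-linear map `fc` to an `m`-linear
map `fp`: inserting a commutator `[S,Y]` at any position of the arguments of `fc` is expressed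
through `fp`. -/
def LacStep {m : ℕ} (Y : Tup k s g)
    (fp : MultilinearMap k (fun _ : Fin m => Tup k s g) (Mat k s))
    (fc : MultilinearMap k (fun _ : Fin (m + 1) => Tup k s g) (Mat k s)) : Prop :=
  ∀ (i : Fin (m + 1)) (S : Mat k s) (Z : Fin m → Tup k s g),
    fc (i.insertNth (brkt S Y) Z) =
      (if h : i = 0 then S * fp Z
        else fp (Function.update Z (i.pred h) (rmul (Z (i.pred h)) S)))
      - (if h : i = Fin.last m then fp Z * S
        else fp (Function.update Z (i.castPred h) (lmul S (Z (i.castPred h)))))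

/-- The boundary conditions at level `L`: elements of the centralizer `C(Y)` can be moved
across any of the `L+1` slots (outer left, between consecutive arguments, outer right). -/
def LacBoundary {L : ℕ} (Y : Tup k s g)
    (f : MultilinearMap k (fun _ : Fin L => Tup k s g) (Mat k s)) : Prop :=
  ∀ c : Mat k s, Centralizes Y c → ∀ (i : Fin (L + 1)) (Z : Fin L → Tup k s g),
    (if h : i = 0 then c * f Z
      else f (Function.update Z (i.pred h) (rmul (Z (i.pred h)) c)))
    = (if h : i = Fin.last L then f Z * c
      else f (Function.update Z (i.castPred h) (lmul c (Z (i.castPred h)))))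

/-- The truncated linearly admissible conditions `LAC_L(Y)` for a sequence
`(f_ℓ)_{ℓ=0}^{L}` of multilinear maps (given as an infinite family, of which only the
members of index `≤ L` are constrained). -/
def SatisfiesLACTrunc (L : ℕ) (Y : Tup k s g)
    (f : ∀ ℓ : ℕ, MultilinearMap k (fun _ : Fin ℓ => Tup k s g) (Mat k s)) : Prop :=
  (∀ ℓ : ℕ, ℓ < L → LacStep Y (f ℓ) (f (ℓ + 1))) ∧ LacBoundary Y (f L)

/-- The (full) linearly admissible conditions `LAC(Y)` for an infinite sequence of
multilinear maps. -/
def SatisfiesLAC (Y : Tup k s g)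
    (f : ∀ ℓ : ℕ, MultilinearMap k (fun _ : Fin ℓ => Tup k s g) (Mat k s)) : Prop :=
  ∀ ℓ : ℕ, LacStep Y (f ℓ) (f (ℓ + 1))


private lemma isCompl_of_mem_iff {R S M : Type*} [Semiring R] [Semiring S] [AddCommMonoid M]
    [Module R M] [Module S M] {P Q : Submodule R M} {P' Q' : Submodule S M}
    (hP : ∀ x, x ∈ P ↔ x ∈ P') (hQ : ∀ x, x ∈ Q ↔ x ∈ Q') (h : IsCompl P' Q') :
    IsCompl P Q := by
  constructor
  · rw [Submodule.disjoint_def]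
    intro x hx hx'
    exact Submodule.disjoint_def.mp h.disjoint x ((hP x).mp hx) ((hQ x).mp hx')
  · rw [codisjoint_iff, eq_top_iff]
    rintro x -
    have hx : x ∈ P' ⊔ Q' := by rw [h.codisjoint.eq_top]; trivial
    obtain ⟨y, hy, z, hz, rfl⟩ := Submodule.mem_sup.mp hx
    exact Submodule.add_mem_sup ((hP y).mpr hy) ((hQ z).mpr hz)

private theorem aux_semisimple {k R V N : Type*} [Field k] [Ring R] [Algebra k R]
    [AddCommGroup V] [Module k V] [FiniteDimensional k V]
    [AddCommGroup N] [Module k N] [FiniteDimensional k N]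
    (φ : R →ₐ[k] Module.End k V) (ψ : R →ₐ[k] Module.End k N)
    (hker : ∀ r : R, φ r = 0 → ψ r = 0)
    (hss : ∀ W : Submodule k V, (∀ (r : R), ∀ v ∈ W, φ r v ∈ W) →
      ∃ W' : Submodule k V, (∀ (r : R), ∀ v ∈ W', φ r v ∈ W') ∧ IsCompl W W')
    (U : Submodule k N) (hU : ∀ (r : R), ∀ x ∈ U, ψ r x ∈ U) :
    ∃ U' : Submodule k N, (∀ (r : R), ∀ x ∈ U', ψ r x ∈ U') ∧ IsCompl U U' := by
  letI mV : Module R V := Module.compHom V φ.toRingHom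
  letI mN : Module R N := Module.compHom N ψ.toRingHom
  have smulV : ∀ (r : R) (v : V), r • v = φ r v := fun _ _ => rfl
  have smulN : ∀ (r : R) (x : N), r • x = ψ r x := fun _ _ => rfl
  have algV : ∀ (c : k) (v : V), (algebraMap k R c) • v = c • v := by
    intro c v
    rw [smulV, AlgHom.commutes, Module.algebraMap_end_apply]
  have algN : ∀ (c : k) (x : N), (algebraMap k R c) • x = c • x := by
    intro c x
    rw [smulN, AlgHom.commutes, Module.algebraMap_end_apply]
  let liftV : ∀ (W : Submodule k V), (∀ (r : R), ∀ v ∈ W, φ r v ∈ W) → Submodule R V :=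
    fun W hW =>
    { carrier := (W : Set V)
      add_mem' := fun ha hb => W.add_mem ha hb
      zero_mem' := W.zero_mem
      smul_mem' := fun r {v} hv => hW r v hv }
  let downV : Submodule R V → Submodule k V := fun W =>
    { carrier := (W : Set V)
      add_mem' := fun ha hb => W.add_mem ha hb
      zero_mem' := W.zero_mem
      smul_mem' := fun c {v} hv => by
        have h := W.smul_mem (algebraMap k R c) hv
        rwa [algV] at h }
  haveI ssV : IsSemisimpleModule R V := by
    refine { exists_isCompl := fun W => ?_ }
    obtain ⟨W', hW', hc⟩ := hss (downV W) (fun r v hv => by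
      have h : φ r v = r • v := (smulV r v).symm
      rw [h]
      exact W.smul_mem r hv)
    exact ⟨liftV W' hW', isCompl_of_mem_iff (P' := downV W) (Q' := W') (fun x => Iff.rfl) (fun x => Iff.rfl) hc⟩
  let b := Module.finBasis k V
  let c := Module.finBasis k N
  let θ : R →ₗ[R] (Fin (Module.finrank k V) → V) :=
    { toFun := fun r i => r • b i
      map_add' := fun r r' => funext fun i => add_smul r r' (b i)
      map_smul' := fun r r' => funext fun i => by
        simp only [RingHom.id_apply, Pi.smul_apply, smul_eq_mul]
        exact mul_smul r r' (b i) }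
  let ν : Fin (Module.finrank k N) → (R →ₗ[R] N) := fun i =>
    { toFun := fun r => r • c i
      map_add' := fun r r' => add_smul r r' (c i)
      map_smul' := fun r r' => by
        simp only [RingHom.id_apply, smul_eq_mul]
        exact mul_smul r r' (c i) }
  haveI ssPi : IsSemisimpleModule R (Fin (Module.finrank k V) → V) := by
    refine isSemisimpleModule_of_isSemisimpleModule_submodule'
      (p := fun i => LinearMap.range (LinearMap.single R (fun _ => V) i)) (fun i => ?_) ?_
    · exact IsSemisimpleModule.range _
    · rw [eq_top_iff]
      rintro x -
      rw [← Finset.univ_sum_single x]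
      exact Submodule.sum_mem _ fun i _ => Submodule.mem_iSup_of_mem i ⟨x i, rfl⟩
  haveI ssQ1 : IsSemisimpleModule R (R ⧸ LinearMap.ker θ) :=
    IsSemisimpleModule.congr (LinearMap.quotKerEquivRange θ)
  have hkerle : ∀ i, LinearMap.ker θ ≤ LinearMap.ker (ν i) := by
    intro i r hr
    have hθ : ∀ j, r • b j = 0 := fun j => congrFun (LinearMap.mem_ker.mp hr) j
    have hφ : φ r = 0 := b.ext fun j => by
      have h := hθ j
      rw [smulV] at h
      simpa using h
    have hψ : ψ r = 0 := hker r hφ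
    rw [LinearMap.mem_ker]
    show r • c i = 0
    rw [smulN, hψ]
    rfl
  haveI ssQ2 : ∀ i, IsSemisimpleModule R (R ⧸ LinearMap.ker (ν i)) := fun i =>
    IsSemisimpleModule.congr
      (Submodule.quotientQuotientEquivQuotient _ _ (hkerle i)).symm
  haveI ssN : IsSemisimpleModule R N := by
    refine isSemisimpleModule_of_isSemisimpleModule_submodule'
      (p := fun i => LinearMap.range (ν i)) (fun i => ?_) ?_
    · exact IsSemisimpleModule.congr (LinearMap.quotKerEquivRange (ν i)).symm
    · rw [eq_top_iff]
      rintro x -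
      rw [← c.sum_repr x]
      refine Submodule.sum_mem _ fun i _ => Submodule.mem_iSup_of_mem i ?_
      exact ⟨algebraMap k R (c.repr x i), algN _ _⟩
  let UR : Submodule R N :=
    { carrier := (U : Set N)
      add_mem' := fun ha hb => U.add_mem ha hb
      zero_mem' := U.zero_mem
      smul_mem' := fun r {x} hx => hU r x hx }
  obtain ⟨Q, hQ⟩ := exists_isCompl UR
  let U' : Submodule k N :=
    { carrier := (Q : Set N)
      add_mem' := fun ha hb => Q.add_mem ha hb
      zero_mem' := Q.zero_mem
      smul_mem' := fun cc {x} hx => by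
        have h := Q.smul_mem (algebraMap k R cc) hx
        rwa [algN] at h }
  refine ⟨U', fun r x hx => ?_, ?_⟩
  · have h := Q.smul_mem r (hx : x ∈ Q)
    rwa [smulN] at h
  · exact isCompl_of_mem_iff (P' := UR) (Q' := Q) (fun x => Iff.rfl) (fun x => Iff.rfl) hQ


private lemma inv_all {k X n : Type*} [Field k] [Fintype n] [DecidableEq n]
    (T : X → Matrix n n k) (W : Submodule k (n → k))
    (hW : ∀ j, ∀ v ∈ W, (T j).mulVec v ∈ W) (f : FreeAlgebra k X) :
    ∀ v ∈ W, (FreeAlgebra.lift k T f).mulVec v ∈ W := by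
  induction f using FreeAlgebra.induction with
  | grade0 c =>
    intro v hv
    rw [AlgHom.commutes, Algebra.algebraMap_eq_smul_one, Matrix.smul_mulVec,
      Matrix.one_mulVec]
    exact W.smul_mem c hv
  | grade1 j =>
    intro v hv
    rw [FreeAlgebra.lift_ι_apply]
    exact hW j v hv
  | mul a b ha hb =>
    intro v hv
    rw [map_mul, ← Matrix.mulVec_mulVec]
    exact ha _ (hb v hv)
  | add a b ha hb =>
    intro v hv
    rw [map_add, Matrix.add_mulVec]
    exact W.add_mem (ha v hv) (hb v hv)

/-- **Separation lemma** (Lemma 6.8).  If `Y` is a semisimple point and the tuple `Z` is not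
a commutator tuple `[S,Y]`, then some nc polynomial `f` vanishes at `Y` but not at the block
upper triangular point `((Y_j, Z_j; 0, Y_j))_j`. -/
theorem separation_lemma {k : Type*} [Field k] [CharZero k]
    {g s : ℕ} (hg : 1 ≤ g) (Y : Tup k s g) (hY : IsSemisimplePt Y)
    (Z : Tup k s g) (hZ : ¬ ∃ S : Mat k s, Z = brkt S Y) :
    ∃ f : FreeAlgebra k (Fin g),
      (FreeAlgebra.lift k Y) f = 0 ∧
      (FreeAlgebra.lift k (fun j => Matrix.fromBlocks (Y j) (Z j) 0 (Y j))) f ≠ 0 := by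
  classical
  by_contra hcon
  push_neg at hcon
  set B : Fin g → Matrix (Fin s ⊕ Fin s) (Fin s ⊕ Fin s) k :=
    fun j => Matrix.fromBlocks (Y j) (Z j) 0 (Y j) with hB
  let φ : FreeAlgebra k (Fin g) →ₐ[k] Module.End k (Fin s → k) :=
    (Matrix.toLinAlgEquiv'.toAlgHom).comp (FreeAlgebra.lift k Y)
  let ψ : FreeAlgebra k (Fin g) →ₐ[k] Module.End k ((Fin s ⊕ Fin s) → k) :=
    (Matrix.toLinAlgEquiv'.toAlgHom).comp (FreeAlgebra.lift k B)
  have φapp : ∀ f v, φ f v = (FreeAlgebra.lift k Y f).mulVec v := by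
    intro f v
    simp [φ, Matrix.toLinAlgEquiv'_apply]
  have ψapp : ∀ f x, ψ f x = (FreeAlgebra.lift k B f).mulVec x := by
    intro f x
    simp [ψ, Matrix.toLinAlgEquiv'_apply]
  have hker : ∀ f, φ f = 0 → ψ f = 0 := by
    intro f hf
    have h1 : (FreeAlgebra.lift k Y) f = 0 := by
      apply Matrix.toLinAlgEquiv'.injective
      rw [map_zero]
      exact hf
    have h2 := hcon f h1
    show Matrix.toLinAlgEquiv' ((FreeAlgebra.lift k B) f) = 0
    rw [h2, map_zero]
  have hss : ∀ W : Submodule k (Fin s → k),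
      (∀ (r : FreeAlgebra k (Fin g)), ∀ v ∈ W, φ r v ∈ W) →
      ∃ W' : Submodule k (Fin s → k),
        (∀ (r : FreeAlgebra k (Fin g)), ∀ v ∈ W', φ r v ∈ W') ∧ IsCompl W W' := by
    intro W hW
    obtain ⟨W', hW', hc⟩ := hY W (fun j v hv => by
      have h := hW (FreeAlgebra.ι k j) v hv
      rwa [φapp, FreeAlgebra.lift_ι_apply] at h)
    refine ⟨W', fun r v hv => ?_, hc⟩
    rw [φapp]
    exact inv_all Y W' hW' r v hv
  let π1 : ((Fin s ⊕ Fin s) → k) →ₗ[k] (Fin s → k) := LinearMap.funLeft k k Sum.inl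
  let π2 : ((Fin s ⊕ Fin s) → k) →ₗ[k] (Fin s → k) := LinearMap.funLeft k k Sum.inr
  let U : Submodule k ((Fin s ⊕ Fin s) → k) := LinearMap.ker π2
  have hUgen : ∀ j, ∀ x ∈ U, (B j).mulVec x ∈ U := by
    intro j x hx
    have hx0 : x ∘ Sum.inr = 0 := hx
    rw [LinearMap.mem_ker]
    funext i
    show ((B j).mulVec x) (Sum.inr i) = 0
    rw [hB]
    rw [show (Matrix.fromBlocks (Y j) (Z j) 0 (Y j)).mulVec x = _ from
      Matrix.fromBlocks_mulVec (Y j) (Z j) 0 (Y j) x]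
    simp [hx0]
  have hU : ∀ (r : FreeAlgebra k (Fin g)), ∀ x ∈ U, ψ r x ∈ U := by
    intro r x hx
    rw [ψapp]
    exact inv_all B U hUgen r x hx
  obtain ⟨U', hU', hcompl⟩ := aux_semisimple φ ψ hker hss U hU
  have hU'gen : ∀ j, ∀ x ∈ U', (B j).mulVec x ∈ U' := by
    intro j x hx
    have h := hU' (FreeAlgebra.ι k j) x hx
    rwa [ψapp, FreeAlgebra.lift_ι_apply] at h
  let p2 : U' →ₗ[k] (Fin s → k) := π2.comp U'.subtype
  have hinj : Function.Injective p2 := by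
    rw [← LinearMap.ker_eq_bot]
    rw [Submodule.eq_bot_iff]
    rintro ⟨x, hx⟩ hmem
    have hxU : x ∈ U := LinearMap.mem_ker.mpr (LinearMap.mem_ker.mp hmem)
    have hx0 := Submodule.disjoint_def.mp hcompl.disjoint x hxU hx
    exact Subtype.ext hx0
  have hsurj : Function.Surjective p2 := by
    intro v
    have hx : (Sum.elim 0 v : (Fin s ⊕ Fin s) → k) ∈ U ⊔ U' := by
      rw [hcompl.codisjoint.eq_top]
      trivial
    obtain ⟨y, hy, z, hz, hyz⟩ := Submodule.mem_sup.mp hx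
    refine ⟨⟨z, hz⟩, ?_⟩
    have hy0 : π2 y = 0 := hy
    have hsum : π2 (y + z) = v := by
      rw [hyz]
      funext i
      rfl
    show π2 z = v
    have : π2 y + π2 z = v := by rw [← map_add, hsum]
    rw [hy0, zero_add] at this
    exact this
  let e := LinearEquiv.ofBijective p2 ⟨hinj, hsurj⟩
  let Slin : (Fin s → k) →ₗ[k] (Fin s → k) := (π1.comp U'.subtype).comp e.symm.toLinearMap
  let S : Mat k s := LinearMap.toMatrix' Slin
  have hS : ∀ u, S.mulVec u = Slin u := fun u => by
    rw [show S.mulVec u = Matrix.toLin' S u from (Matrix.toLin'_apply S u).symm,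
      Matrix.toLin'_toMatrix']
  have key : ∀ w : U', π1 (w : (Fin s ⊕ Fin s) → k) = Slin (π2 (w : (Fin s ⊕ Fin s) → k)) := by
    intro w
    have h1 : e.symm (p2 w) = w := by
      have h : p2 w = e w := rfl
      rw [h, e.symm_apply_apply]
    have h2 : Slin (π2 (w : (Fin s ⊕ Fin s) → k)) = π1 (U'.subtype (e.symm (p2 w))) := rfl
    rw [h2, h1]
    rfl
  have main : ∀ j v, (Z j).mulVec v = ((brkt S Y) j).mulVec v := by
    intro j v
    set w : U' := e.symm v with hw
    set x : (Fin s ⊕ Fin s) → k := (w : (Fin s ⊕ Fin s) → k) with hxdef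
    have hx2 : x ∘ Sum.inr = v := by
      show π2 x = v
      have h : p2 w = v := e.apply_symm_apply v
      exact h
    have hx1 : x ∘ Sum.inl = S.mulVec v := by
      rw [hS]
      have h := key w
      rw [← hxdef] at h
      calc x ∘ Sum.inl = π1 x := rfl
        _ = Slin (π2 x) := h
        _ = Slin v := by rw [show π2 x = v from hx2]
    have hyU' : (B j).mulVec x ∈ U' := hU'gen j x w.2
    have hmul := Matrix.fromBlocks_mulVec (Y j) (Z j) 0 (Y j) x
    have hBx : (B j).mulVec x = Sum.elim ((Y j).mulVec (x ∘ Sum.inl) + (Z j).mulVec (x ∘ Sum.inr))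
        ((0 : Mat k s).mulVec (x ∘ Sum.inl) + (Y j).mulVec (x ∘ Sum.inr)) := by
      rw [hB]; exact hmul
    have hc1 : ((B j).mulVec x) ∘ Sum.inl = (Y j).mulVec (S.mulVec v) + (Z j).mulVec v := by
      rw [hBx]
      funext i
      show (Y j).mulVec (x ∘ Sum.inl) i + (Z j).mulVec (x ∘ Sum.inr) i = _
      rw [hx1, hx2]
      rfl
    have hc2 : ((B j).mulVec x) ∘ Sum.inr = (Y j).mulVec v := by
      rw [hBx]
      funext i
      show (0 : Mat k s).mulVec (x ∘ Sum.inl) i + (Y j).mulVec (x ∘ Sum.inr) i = _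
      rw [hx2, Matrix.zero_mulVec]
      simp
    have h' : ((B j).mulVec x) ∘ Sum.inl = Slin (((B j).mulVec x) ∘ Sum.inr) :=
      key ⟨(B j).mulVec x, hyU'⟩
    rw [hc1, hc2] at h'
    rw [← hS] at h'
    show (Z j).mulVec v = (S * Y j - Y j * S).mulVec v
    rw [Matrix.sub_mulVec, ← Matrix.mulVec_mulVec, ← Matrix.mulVec_mulVec]
    exact eq_sub_of_add_eq' h'
  apply hZ
  refine ⟨S, funext fun j => Matrix.ext fun a b => ?_⟩
  have h := congrFun (main j (Pi.single b 1)) a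
  simpa [Matrix.mulVec_single] using h

end NCPaper
end

section
/- Matrix structure of the germ algebra (formal version of part of Theorem C, via Corollary 6.12): Let k be a field of characteristic 0, g ≥ 1, and let Y ∈ (M_s(k))^g be a point with S(Y) = M_s(k). Then the I_0(Y)-adic completion Ô_Y = lim_ℓ k⟨x_1,…,x_g⟩/I_0(Y)^ℓ is isomorphic as a k-algebra to a matrix algebra M_s(A) for some unital k-algebra A. -/
namespace NCPaper

variable {k : Type*} [Field k]

variable {s g : ℕ}

/-- Evaluation of nc polynomials at the point `Y`. -/
noncomputable def evalY (Y : Tup k s g) : FreeAlgebra k (Fin g) →ₐ[k] Mat k s :=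
  FreeAlgebra.lift k Y

/-- The vanishing ideal `I_0(Y)` (the kernel of evaluation at `Y`), as a `k`-subspace of
the free algebra; it is a two-sided ideal, and its powers are spans of products. -/
noncomputable def I0 (Y : Tup k s g) : Submodule k (FreeAlgebra k (Fin g)) :=
  LinearMap.ker (evalY Y).toLinearMap

lemma I0_mul_le (Y : Tup k s g) : I0 Y * I0 Y ≤ I0 Y := by
  rw [Submodule.mul_le]
  intro x hx y hy
  simp only [I0, LinearMap.mem_ker, AlgHom.toLinearMap_apply] at *
  rw [map_mul, hx, zero_mul]

lemma I0_mul_top_le (Y : Tup k s g) : I0 Y * ⊤ ≤ I0 Y := by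
  rw [Submodule.mul_le]
  intro x hx y _
  simp only [I0, LinearMap.mem_ker, AlgHom.toLinearMap_apply] at *
  rw [map_mul, hx, zero_mul]

lemma I0_pow_mul_top_le (Y : Tup k s g) (a : ℕ) (ha : 1 ≤ a) :
    (I0 Y) ^ a * ⊤ ≤ (I0 Y) ^ a := by
  induction a with
  | zero => omega
  | succ n ih =>
    rcases Nat.eq_or_lt_of_le ha with h1 | h1
    · rw [← h1, pow_one]; exact I0_mul_top_le Y
    · have hn : 1 ≤ n := by omega
      calc (I0 Y) ^ (n + 1) * ⊤ = (I0 Y) ^ n * (I0 Y * ⊤) := by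
            rw [pow_succ, mul_assoc]
        _ ≤ (I0 Y) ^ n * I0 Y := mul_le_mul' le_rfl (I0_mul_top_le Y)
        _ = (I0 Y) ^ (n + 1) := (pow_succ _ _).symm

lemma I0_pow_le (Y : Tup k s g) {a b : ℕ} (ha : 1 ≤ a) (hab : a ≤ b) :
    (I0 Y) ^ b ≤ (I0 Y) ^ a := by
  obtain ⟨c, rfl⟩ := Nat.exists_eq_add_of_le hab
  calc (I0 Y) ^ (a + c) = (I0 Y) ^ a * (I0 Y) ^ c := pow_add _ _ _
    _ ≤ (I0 Y) ^ a * ⊤ := mul_le_mul' le_rfl le_top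
    _ ≤ (I0 Y) ^ a := I0_pow_mul_top_le Y a ha

/-- The congruence relation on the free algebra defined by the two-sided ideal `I_0(Y)^ℓ`. -/
def qRel (Y : Tup k s g) (ℓ : ℕ) (x y : FreeAlgebra k (Fin g)) : Prop :=
  x - y ∈ (I0 Y) ^ ℓ

/-- The quotient algebra `k⟨x⟩ / I_0(Y)^{ℓ+1}`. -/
abbrev Qt (Y : Tup k s g) (ℓ : ℕ) := RingQuot (qRel Y (ℓ + 1))

/-- The canonical projection `k⟨x⟩/I_0(Y)^{m+1} → k⟨x⟩/I_0(Y)^{ℓ+1}` for `ℓ ≤ m`. -/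
noncomputable def projQ (Y : Tup k s g) {ℓ m : ℕ} (h : ℓ ≤ m) : Qt Y m →ₐ[k] Qt Y ℓ :=
  RingQuot.liftAlgHom k ⟨RingQuot.mkAlgHom k (qRel Y (ℓ + 1)),
    fun _ _ hxy => RingQuot.mkAlgHom_rel k
      (I0_pow_le Y (Nat.succ_le_succ (Nat.zero_le ℓ)) (Nat.succ_le_succ h) hxy)⟩

/-- The inverse limit `lim_ℓ k⟨x⟩/I_0(Y)^ℓ` of the quotients along the canonical
projections, realized as the subalgebra of coherent sequences in the product. -/
noncomputable def InvLim (Y : Tup k s g) : Subalgebra k (∀ ℓ : ℕ, Qt Y ℓ) where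
  carrier := {x | ∀ (ℓ m : ℕ) (h : ℓ ≤ m), projQ Y h (x m) = x ℓ}
  mul_mem' := by
    intro a b ha hb ℓ m h
    simp only [Pi.mul_apply, map_mul, ha ℓ m h, hb ℓ m h]
  add_mem' := by
    intro a b ha hb ℓ m h
    simp only [Pi.add_apply, map_add, ha ℓ m h, hb ℓ m h]
  algebraMap_mem' := by
    intro r ℓ m h
    simp only [Pi.algebraMap_apply, AlgHom.commutes]


section AuxMatrixUnits

universe u' v'


theorem exists_matrix_iso_of_matrixUnits (K : Type u) [CommRing K] {R : Type v'} [Ring R]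
    [Algebra K R] {s : ℕ} (E : Fin s → Fin s → R)
    (hmul : ∀ i j p q, E i j * E p q = if j = p then E i q else 0)
    (hone : ∑ i, E i i = 1) :
    ∃ (A : Type v') (_ : Ring A) (_ : Algebra K A),
      Nonempty (R ≃ₐ[K] Matrix (Fin s) (Fin s) A) := by
  classical
  set S : Set R := Set.range fun p : Fin s × Fin s => E p.1 p.2 with hS
  refine ⟨Subalgebra.centralizer K S, inferInstance, inferInstance, ?_⟩
  set A : Subalgebra K R := Subalgebra.centralizer K S with hA
  have hcomm : ∀ (a : A) (i j : Fin s), E i j * (a : R) = (a : R) * E i j := by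
    intro a i j
    exact (Subalgebra.mem_centralizer_iff K).mp a.2 _ ⟨(i, j), rfl⟩
  -- the forward algebra hom
  have key_mul : ∀ M N : Matrix (Fin s) (Fin s) A,
      (∑ i, ∑ j, ((M * N) i j : R) * E i j)
        = (∑ i, ∑ j, ((M i j : R)) * E i j) * (∑ p, ∑ q, ((N p q : R)) * E p q) := by
    intro M N
    rw [Finset.sum_mul]
    refine Finset.sum_congr rfl fun i _ => ?_
    rw [Finset.sum_mul]
    -- LHS over j ; RHS over j of products
    have hterm : ∀ j : Fin s, ((M i j : R)) * E i j * (∑ p, ∑ q, ((N p q : R)) * E p q)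
        = ∑ q, ((M i j : R) * (N j q : R)) * E i q := by
      intro j
      simp only [Finset.mul_sum]
      rw [Finset.sum_comm]
      refine Finset.sum_congr rfl fun q _ => ?_
      have : ∀ p, (M i j : R) * E i j * ((N p q : R) * E p q)
          = (M i j : R) * (N p q : R) * (if j = p then E i q else 0) := by
        intro p
        calc (M i j : R) * E i j * ((N p q : R) * E p q)
            = (M i j : R) * ((E i j * (N p q : R)) * E p q) := by
              rw [mul_assoc, mul_assoc]
          _ = (M i j : R) * ((N p q : R) * (E i j * E p q)) := by rw [hcomm, mul_assoc]
          _ = (M i j : R) * (N p q : R) * (if j = p then E i q else 0) := by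
              rw [hmul, mul_assoc]
      simp only [this, mul_ite, mul_zero]
      rw [Finset.sum_ite_eq, if_pos (Finset.mem_univ j)]
    simp only [hterm]
    rw [Finset.sum_comm]
    refine Finset.sum_congr rfl fun q _ => ?_
    simp only [Matrix.mul_apply, AddSubmonoidClass.coe_finset_sum, MulMemClass.coe_mul,
      Finset.sum_mul]
  -- membership of the ψ-entries in the centralizer
  have hcent : ∀ (r : R) (i j : Fin s), (∑ m, E m i * r * E j m) ∈ A := by
    intro r i j
    rw [hA, Subalgebra.mem_centralizer_iff]
    rintro g ⟨⟨a, b⟩, rfl⟩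
    simp only
    rw [Finset.mul_sum, Finset.sum_mul]
    have L : ∀ m, E a b * (E m i * r * E j m) = if b = m then E a i * r * E j m else 0 := by
      intro m
      rw [← mul_assoc, ← mul_assoc, hmul]
      by_cases h : b = m <;> simp [h]
    have Rr : ∀ m, (E m i * r * E j m) * E a b = if m = a then E m i * r * E j b else 0 := by
      intro m
      rw [mul_assoc (E m i * r), hmul]
      by_cases h : m = a <;> simp [h, ← mul_assoc]
    simp only [L, Rr, Finset.sum_ite_eq, Finset.sum_ite_eq', Finset.mem_univ, if_true]
  -- the forward algebra hom
  let Φ : Matrix (Fin s) (Fin s) A →ₐ[K] R :=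
    { toFun := fun M => ∑ i, ∑ j, ((M i j : R)) * E i j
      map_one' := by
        simp only [Matrix.one_apply, apply_ite (fun a : A => (a : R)), OneMemClass.coe_one,
          ZeroMemClass.coe_zero, ite_mul, one_mul, zero_mul, Finset.sum_ite_eq, Finset.mem_univ,
          if_true, hone]
      map_mul' := fun M N => key_mul M N
      map_zero' := by simp
      map_add' := by
        intro M N
        simp [Matrix.add_apply, add_mul, Finset.sum_add_distrib]
      commutes' := by
        intro r
        simp only [Matrix.algebraMap_matrix_apply, apply_ite (fun a : A => (a : R)),
          ZeroMemClass.coe_zero, ite_mul, zero_mul, Finset.sum_ite_eq, Finset.mem_univ, if_true]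
        rw [← Finset.mul_sum, hone, mul_one]
        rfl }
  have hΦ : ∀ M : Matrix (Fin s) (Fin s) A, Φ M = ∑ i, ∑ j, ((M i j : R)) * E i j :=
    fun _ => rfl
  -- the inverse map
  let ψ : R → Matrix (Fin s) (Fin s) A := fun r i j => ⟨∑ m, E m i * r * E j m, hcent r i j⟩
  have hψΦ : ∀ M, ψ (Φ M) = M := by
    intro M
    ext i j
    show (∑ m, E m i * (Φ M) * E j m) = (M i j : R)
    have hterm2 : ∀ m, E m i * (Φ M) * E j m = (M i j : R) * E m m := by
      intro m
      rw [hΦ]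
      simp only [Finset.mul_sum, Finset.sum_mul, ← mul_assoc]
      have : ∀ p q, E m i * (M p q : R) * E p q * E j m
          = if i = p then (if q = j then (M p q : R) * E m m else 0) else 0 := by
        intro p q
        rw [hcomm]
        by_cases h1 : i = p
        · by_cases h2 : q = j <;> simp [h1, h2, mul_assoc, hmul]
        · simp [h1, mul_assoc, hmul]
      simp only [this]
      rw [Finset.sum_comm]
      simp only [Finset.sum_ite_eq, Finset.sum_ite_eq', Finset.mem_univ, if_true]
    simp only [hterm2]
    rw [← Finset.mul_sum, hone, mul_one]
  have hΦψ : ∀ r, Φ (ψ r) = r := by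
    intro r
    rw [hΦ]
    show (∑ i, ∑ j, (∑ m, E m i * r * E j m) * E i j) = r
    have hterm3 : ∀ i j, (∑ m, E m i * r * E j m) * E i j = E i i * r * E j j := by
      intro i j
      rw [Finset.sum_mul]
      have : ∀ m, (E m i * r * E j m) * E i j = if m = i then E m i * r * E j j else 0 := by
        intro m
        rw [mul_assoc (E m i * r), hmul]
        by_cases h : m = i <;> simp [h, ← mul_assoc]
      simp only [this, Finset.sum_ite_eq', Finset.mem_univ, if_true]
    simp only [hterm3]
    calc (∑ i, ∑ j, E i i * r * E j j) = ∑ i, E i i * r * ∑ j, E j j := by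
          simp [Finset.mul_sum, mul_assoc]
      _ = r := by
          simp only [hone, mul_one]
          rw [← Finset.sum_mul, hone, one_mul]
  have hbij : Function.Bijective Φ :=
    ⟨Function.LeftInverse.injective hψΦ, Function.RightInverse.surjective hΦψ⟩
  exact ⟨(AlgEquiv.ofBijective Φ hbij).symm⟩



theorem matrixUnits_lift {B C : Type*} [Ring B] [Ring C] (π : B →+* C)
    (hπ : Function.Surjective π) (hsq : ∀ x y : B, π x = 0 → π y = 0 → x * y = 0)
    {s : ℕ} (e : Fin s → Fin s → C)
    (hmul : ∀ i j p q, e i j * e p q = if j = p then e i q else 0)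
    (hone : ∑ i, e i i = 1) :
    ∃ f : Fin s → Fin s → B,
      (∀ i j p q, f i j * f p q = if j = p then f i q else 0) ∧
      (∑ i, f i i = 1) ∧ (∀ i j, π (f i j) = e i j) := by
  classical
  rcases Nat.eq_zero_or_pos s with hs | hs
  · subst hs
    have h1C : (1 : C) = 0 := by rw [← hone]; simp
    have h10 : (1 : B) = 0 := by
      have := hsq 1 1 (by rw [map_one, h1C]) (by rw [map_one, h1C])
      simpa using this
    exact ⟨fun i => i.elim0, fun i => i.elim0, by simp [h10.symm], fun i => i.elim0⟩
  set z : Fin s := ⟨0, hs⟩ with hz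
  have hx : ∀ i j, π (Classical.choose (hπ (e i j))) = e i j :=
    fun i j => Classical.choose_spec (hπ (e i j))
  set x : Fin s → Fin s → B := fun i j => Classical.choose (hπ (e i j)) with hxdef
  replace hx : ∀ i j, π (x i j) = e i j := hx
  set c : Fin s → Fin s → Fin s → Fin s → B :=
    fun i j p q => x i j * x p q - (if j = p then x i q else 0) with hcdef
  have hc : ∀ i j p q, π (c i j p q) = 0 := by
    intro i j p q
    simp only [hcdef, map_sub, map_mul, hx, apply_ite π, map_zero, hmul, sub_self]
  have hxx : ∀ i j p q, x i j * x p q = c i j p q + (if j = p then x i q else 0) := by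
    intro i j p q; simp [hcdef]
  set h : Fin s → Fin s → B := fun i j => ∑ m, x m z * c z m i j with hhdef
  have hh : ∀ i j, π (h i j) = 0 := by
    intro i j
    simp only [hhdef, map_sum, map_mul, hc, mul_zero, Finset.sum_const_zero]
  set S : B := ∑ i, x i i with hSdef
  have hσ : π (S - 1) = 0 := by
    simp only [hSdef, map_sub, map_sum, hx, map_one, hone, sub_self]
  set P : B := ∑ m, x m z * x z m with hPdef
  have hκ : π (P - 1) = 0 := by
    have : π P = 1 := by
      simp only [hPdef, map_sum, map_mul, hx, hmul]
      simp [hone]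
    rw [map_sub, this, map_one, sub_self]
  have hPc : ∀ i j p q, P * c i j p q = c i j p q := by
    intro i j p q
    have h0 : (P - 1) * c i j p q = 0 := hsq _ _ hκ (hc i j p q)
    rw [sub_mul, one_mul] at h0
    exact sub_eq_zero.mp h0
  have hA : ∀ i j p q, x i j * h p q = x i z * c z j p q := by
    intro i j p q
    calc x i j * h p q = ∑ m, (x i j * x m z) * c z m p q := by
          simp only [hhdef, Finset.mul_sum, ← mul_assoc]
      _ = ∑ m, (c i j m z + (if j = m then x i z else 0)) * c z m p q := by
          simp only [hxx]
      _ = ∑ m, ((if j = m then x i z * c z m p q else 0)) := by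
          refine Finset.sum_congr rfl fun m _ => ?_
          rw [add_mul, hsq _ _ (hc i j m z) (hc z m p q), zero_add, ite_mul, zero_mul]
      _ = x i z * c z j p q := by
          rw [Finset.sum_ite_eq, if_pos (Finset.mem_univ j)]
  have hB : ∀ m i j p q, c z m i j * x p q
      = (if j = p then c z m i q else 0) + x z m * c i j p q - (if m = i then c z j p q else 0) := by
    intro m i j p q
    simp only [hcdef]
    by_cases h1 : j = p <;> by_cases h2 : m = i <;> simp [h1, h2] <;> noncomm_ring
  have hkey : ∀ i j p q, x i j * h p q + h i j * x p q
      = (if j = p then h i q else 0) + c i j p q := by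
    intro i j p q
    have step : h i j * x p q
        = (if j = p then h i q else 0) + c i j p q - x i z * c z j p q := by
      calc h i j * x p q = ∑ m, x m z * (c z m i j * x p q) := by
            simp only [hhdef, Finset.sum_mul, mul_assoc]
        _ = ∑ m, (x m z * ((if j = p then c z m i q else 0) + x z m * c i j p q
              - (if m = i then c z j p q else 0))) := by
            simp only [hB]
        _ = (∑ m, (if j = p then x m z * c z m i q else 0))
              + (∑ m, (x m z * x z m) * c i j p q)
              - (∑ m, (if m = i then x m z * c z j p q else 0)) := by
            rw [← Finset.sum_add_distrib, ← Finset.sum_sub_distrib]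
            refine Finset.sum_congr rfl fun m _ => ?_
            simp only [mul_sub, mul_add, mul_ite, mul_zero, ← mul_assoc]
        _ = (if j = p then h i q else 0) + c i j p q - x i z * c z j p q := by
            rw [← Finset.sum_mul, ← hPdef, hPc]
            congr 1
            congr 1
            · by_cases h1 : j = p <;> simp [h1, hhdef]
            · rw [Finset.sum_ite_eq', if_pos (Finset.mem_univ i)]
    rw [hA, step]
    abel
  refine ⟨fun i j => x i j - h i j, ?_, ?_, ?_⟩
  · intro i j p q
    have expand : (x i j - h i j) * (x p q - h p q)
        = x i j * x p q - (x i j * h p q + h i j * x p q) + h i j * h p q := by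
      noncomm_ring
    rw [expand, hsq _ _ (hh i j) (hh p q), hxx, hkey]
    by_cases h1 : j = p <;> simp [h1] <;> abel
  · have hsumh : ∑ i, h i i = P * S - P := by
      calc ∑ i, h i i = ∑ m, x m z * (∑ i, c z m i i) := by
            rw [Finset.sum_comm]
            simp only [hhdef, Finset.mul_sum]
      _ = ∑ m, x m z * (x z m * S - x z m) := by
            refine Finset.sum_congr rfl fun m _ => ?_
            congr 1
            simp only [hcdef]
            rw [Finset.sum_sub_distrib, ← Finset.mul_sum, ← hSdef,
              Finset.sum_ite_eq, if_pos (Finset.mem_univ m)]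
      _ = ∑ m, ((x m z * x z m) * S - x m z * x z m) := by
            refine Finset.sum_congr rfl fun m _ => ?_
            rw [mul_sub, ← mul_assoc]
      _ = P * S - P := by
            rw [Finset.sum_sub_distrib, ← Finset.sum_mul]
    have hzero : (P - 1) * (S - 1) = 0 := hsq _ _ hκ hσ
    have : ∑ i, (x i i - h i i) - 1 = -((P - 1) * (S - 1)) := by
      rw [Finset.sum_sub_distrib, hsumh, ← hSdef]
      noncomm_ring
    rw [hzero, neg_zero] at this
    exact sub_eq_zero.mp this
  · intro i j
    rw [map_sub, hh, hx, sub_zero]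

end AuxMatrixUnits


lemma top_mul_I0_le (Y : Tup k s g) : ⊤ * I0 Y ≤ I0 Y := by
  rw [Submodule.mul_le]
  intro x _ y hy
  simp only [I0, LinearMap.mem_ker, AlgHom.toLinearMap_apply] at *
  rw [map_mul, hy, mul_zero]

lemma top_mul_I0_pow_le (Y : Tup k s g) (a : ℕ) (ha : 1 ≤ a) :
    ⊤ * (I0 Y) ^ a ≤ (I0 Y) ^ a := by
  induction a with
  | zero => omega
  | succ n ih =>
    rcases Nat.eq_or_lt_of_le ha with h1 | h1
    · rw [← h1, pow_one]; exact top_mul_I0_le Y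
    · have hn : 1 ≤ n := by omega
      calc ⊤ * (I0 Y) ^ (n + 1) = (⊤ * (I0 Y) ^ n) * I0 Y := by
            rw [pow_succ, mul_assoc]
        _ ≤ (I0 Y) ^ n * I0 Y := mul_le_mul' (ih hn) le_rfl
        _ = (I0 Y) ^ (n + 1) := (pow_succ _ _).symm

/-- The ring congruence on the free algebra given by the two-sided ideal `I_0(Y)^{n+1}`. -/
def QCcon (Y : Tup k s g) (n : ℕ) : RingCon (FreeAlgebra k (Fin g)) where
  r a b := a - b ∈ (I0 Y) ^ (n + 1)
  iseqv := ⟨fun a => by simp, fun {a b} h => by simpa using neg_mem h,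
    fun {a b c} h1 h2 => by simpa using add_mem h1 h2⟩
  add' {a b c d} h1 h2 := by
    have h1' : a - b ∈ (I0 Y) ^ (n + 1) := h1
    have h2' : c - d ∈ (I0 Y) ^ (n + 1) := h2
    show a + c - (b + d) ∈ (I0 Y) ^ (n + 1)
    rw [add_sub_add_comm]
    exact add_mem h1' h2'
  mul' {a b c d} h1 h2 := by
    have h1' : a - b ∈ (I0 Y) ^ (n + 1) := h1
    have h2' : c - d ∈ (I0 Y) ^ (n + 1) := h2
    show a * c - b * d ∈ (I0 Y) ^ (n + 1)
    have h3 : a * (c - d) ∈ (I0 Y) ^ (n + 1) :=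
      top_mul_I0_pow_le Y (n + 1) (Nat.succ_le_succ (Nat.zero_le n))
        (Submodule.mul_mem_mul Submodule.mem_top h2')
    have h4 : (a - b) * d ∈ (I0 Y) ^ (n + 1) :=
      I0_pow_mul_top_le Y (n + 1) (Nat.succ_le_succ (Nat.zero_le n))
        (Submodule.mul_mem_mul h1' Submodule.mem_top)
    have := add_mem h3 h4
    have heq : a * (c - d) + (a - b) * d = a * c - b * d := by noncomm_ring
    rwa [heq] at this

abbrev QC (Y : Tup k s g) (n : ℕ) := (QCcon Y n).Quotient

noncomputable def mkC (Y : Tup k s g) (n : ℕ) : FreeAlgebra k (Fin g) →+* QC Y n :=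
  RingCon.mk' (QCcon Y n)

lemma mkC_surjective (Y : Tup k s g) (n : ℕ) : Function.Surjective (mkC Y n) :=
  fun x => Quotient.inductionOn' x fun a => ⟨a, rfl⟩

lemma mkC_eq_iff (Y : Tup k s g) (n : ℕ) {a b : FreeAlgebra k (Fin g)} :
    mkC Y n a = mkC Y n b ↔ a - b ∈ (I0 Y) ^ (n + 1) :=
  RingCon.eq _

/-- The projection between consecutive ring-congruence quotients. -/
noncomputable def projC (Y : Tup k s g) (n : ℕ) : QC Y (n + 1) →+* QC Y n where
  toFun x := Quotient.liftOn' x (fun a => mkC Y n a) fun a b hab => by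
    exact (mkC_eq_iff Y n).mpr
      (I0_pow_le Y (Nat.succ_le_succ (Nat.zero_le n)) (by omega) hab)
  map_one' := rfl
  map_mul' x y := Quotient.inductionOn₂' x y fun a b => rfl
  map_zero' := rfl
  map_add' x y := Quotient.inductionOn₂' x y fun a b => rfl

lemma projC_mk (Y : Tup k s g) (n : ℕ) (a : FreeAlgebra k (Fin g)) :
    projC Y n (mkC Y (n + 1) a) = mkC Y n a := rfl

lemma projC_surjective (Y : Tup k s g) (n : ℕ) : Function.Surjective (projC Y n) :=
  fun x => Quotient.inductionOn' x fun a => ⟨mkC Y (n + 1) a, rfl⟩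

lemma projC_sq_zero (Y : Tup k s g) (n : ℕ) (x y : QC Y (n + 1))
    (hx : projC Y n x = 0) (hy : projC Y n y = 0) : x * y = 0 := by
  induction x using Quotient.inductionOn' with | h a =>
  induction y using Quotient.inductionOn' with | h b =>
  have ha : a ∈ (I0 Y) ^ (n + 1) := by
    have : mkC Y n a = mkC Y n 0 := hx
    simpa using (mkC_eq_iff Y n).mp this
  have hb : b ∈ (I0 Y) ^ (n + 1) := by
    have : mkC Y n b = mkC Y n 0 := hy
    simpa using (mkC_eq_iff Y n).mp this
  have hab : a * b ∈ (I0 Y) ^ (n + 2) := by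
    have h1 : a * b ∈ (I0 Y) ^ (n + 1) * (I0 Y) ^ (n + 1) := Submodule.mul_mem_mul ha hb
    rw [← pow_add] at h1
    exact I0_pow_le Y (by omega) (by omega) h1
  have : mkC Y (n + 1) (a * b) = mkC Y (n + 1) 0 := by
    rw [mkC_eq_iff]; simpa using hab
  exact (by simpa using this : mkC Y (n + 1) a * mkC Y (n + 1) b = 0)


lemma honeM {s : ℕ} : (∑ i, Matrix.single i i (1 : k)) = (1 : Mat k s) := by
  ext a b
  simp only [Matrix.sum_apply, Matrix.single, Matrix.one_apply, Matrix.of_apply, ite_and]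
  rw [Finset.sum_ite_eq', if_pos (Finset.mem_univ a)]

/-- A system of matrix units. -/
def MURel (Y : Tup k s g) {n : ℕ} (E : Fin s → Fin s → QC Y n) : Prop :=
  (∀ i j p q, E i j * E p q = if j = p then E i q else 0) ∧ (∑ i, E i i = 1)

noncomputable def muBase (Y : Tup k s g) (hsurj : Function.Surjective (evalY Y)) :
    {E : Fin s → Fin s → QC Y 0 // MURel Y E} := by
  classical
  refine ⟨fun i j => mkC Y 0 (Classical.choose (hsurj (Matrix.single i j 1))), ?_, ?_⟩
  all_goals
    have hw : ∀ i j : Fin s, evalY Y (Classical.choose (hsurj (Matrix.single i j 1)))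
        = Matrix.single i j 1 :=
      fun i j => Classical.choose_spec (hsurj (Matrix.single i j 1))
  all_goals
    have hmem : ∀ u : FreeAlgebra k (Fin g), evalY Y u = 0 → u ∈ (I0 Y) ^ (0 + 1) := by
      intro u hu
      rw [zero_add, pow_one]
      exact LinearMap.mem_ker.mpr hu
  · intro i j p q
    rw [← map_mul]
    by_cases hjp : j = p
    · subst hjp
      rw [if_pos rfl, mkC_eq_iff]
      apply hmem
      rw [map_sub, map_mul, hw, hw, hw, Matrix.single_mul_single_same, one_mul, sub_self]
    · rw [if_neg hjp]
      have : mkC Y 0 (0 : FreeAlgebra k (Fin g)) = 0 := map_zero _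
      rw [← this, mkC_eq_iff]
      apply hmem
      rw [map_sub, map_mul, hw, hw, map_zero, sub_zero]
      exact Matrix.single_mul_single_of_ne (c := (1 : k)) (i := i) (j := j) (k := p) hjp (1 : k)
  · rw [← map_sum]
    have : mkC Y 0 (1 : FreeAlgebra k (Fin g)) = 1 := map_one _
    rw [← this, mkC_eq_iff]
    apply hmem
    rw [map_sub, map_sum, map_one]
    simp only [hw, honeM, sub_self]

noncomputable def muStep (Y : Tup k s g) (n : ℕ)
    (E : {E : Fin s → Fin s → QC Y n // MURel Y E}) :
    {E' : Fin s → Fin s → QC Y (n + 1) // MURel Y E'} :=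
  ⟨(matrixUnits_lift (projC Y n) (projC_surjective Y n) (projC_sq_zero Y n)
      E.1 E.2.1 E.2.2).choose,
   (matrixUnits_lift (projC Y n) (projC_surjective Y n) (projC_sq_zero Y n)
      E.1 E.2.1 E.2.2).choose_spec.1,
   (matrixUnits_lift (projC Y n) (projC_surjective Y n) (projC_sq_zero Y n)
      E.1 E.2.1 E.2.2).choose_spec.2.1⟩

lemma muStep_coh (Y : Tup k s g) (n : ℕ) (E : {E : Fin s → Fin s → QC Y n // MURel Y E})
    (i j : Fin s) : projC Y n ((muStep Y n E).1 i j) = E.1 i j :=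
  (matrixUnits_lift (projC Y n) (projC_surjective Y n) (projC_sq_zero Y n)
      E.1 E.2.1 E.2.2).choose_spec.2.2 i j

noncomputable def muSys (Y : Tup k s g) (hsurj : Function.Surjective (evalY Y)) :
    ∀ n, {E : Fin s → Fin s → QC Y n // MURel Y E} :=
  fun n => Nat.rec (muBase Y hsurj) (fun n E => muStep Y n E) n

noncomputable def muRep (Y : Tup k s g) (hsurj : Function.Surjective (evalY Y))
    (n : ℕ) (i j : Fin s) : FreeAlgebra k (Fin g) :=
  Classical.choose (mkC_surjective Y n ((muSys Y hsurj n).1 i j))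

lemma muRep_spec (Y : Tup k s g) (hsurj : Function.Surjective (evalY Y)) (n : ℕ) (i j : Fin s) :
    mkC Y n (muRep Y hsurj n i j) = (muSys Y hsurj n).1 i j :=
  Classical.choose_spec (mkC_surjective Y n ((muSys Y hsurj n).1 i j))

lemma muSys_down (Y : Tup k s g) (hsurj : Function.Surjective (evalY Y)) {l m : ℕ}
    (h : l ≤ m) (i j : Fin s) (a : FreeAlgebra k (Fin g))
    (ha : mkC Y m a = (muSys Y hsurj m).1 i j) :
    mkC Y l a = (muSys Y hsurj l).1 i j := by
  induction m, h using Nat.le_induction with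
  | base => exact ha
  | succ m hm ih =>
    apply ih
    have h2 := congrArg (projC Y m) ha
    rw [projC_mk] at h2
    exact h2.trans (muStep_coh Y m (muSys Y hsurj m) i j)

lemma muRep_rel_mul (Y : Tup k s g) (hsurj : Function.Surjective (evalY Y)) (n : ℕ)
    (i j p q : Fin s) :
    mkC Y n (muRep Y hsurj n i j * muRep Y hsurj n p q)
      = mkC Y n (if j = p then muRep Y hsurj n i q else 0) := by
  rw [map_mul, muRep_spec, muRep_spec, (muSys Y hsurj n).2.1 i j p q]
  by_cases hjp : j = p
  · simp [hjp, muRep_spec]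
  · simp [hjp]

lemma muRep_rel_one (Y : Tup k s g) (hsurj : Function.Surjective (evalY Y)) (n : ℕ) :
    mkC Y n (∑ i, muRep Y hsurj n i i) = mkC Y n 1 := by
  rw [map_sum, map_one]
  simp only [muRep_spec]
  exact (muSys Y hsurj n).2.2


universe u

set_option synthInstance.maxHeartbeats 1000000
set_option maxHeartbeats 1000000

/-- **Matrix structure of the germ algebra** (formal version of part of Theorem C, via
Corollary 6.12).  If the point `Y` generates the full matrix algebra `M_s(k)`, then the
`I_0(Y)`-adic completion of the free algebra is isomorphic to a matrix algebra `M_s(A)`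
over some unital `k`-algebra `A`. -/
theorem germ_algebra_matrix_structure {k : Type u} [Field k] [CharZero k]
    {g s : ℕ} (hg : 1 ≤ g) (Y : Tup k s g)
    (hfull : Algebra.adjoin k (Set.range Y) = ⊤) :
    ∃ (A : Type u) (_ : Ring A) (_ : Algebra k A),
      Nonempty (InvLim Y ≃ₐ[k] Matrix (Fin s) (Fin s) A) := by
  classical
  have hsurj : Function.Surjective (evalY Y) := by
    rw [← AlgHom.range_eq_top]
    have hle : Algebra.adjoin k (Set.range Y) ≤ (evalY Y).range := by
      apply Algebra.adjoin_le
      rintro _ ⟨j, rfl⟩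
      exact ⟨FreeAlgebra.ι k j, by simp [evalY]⟩
    rw [hfull] at hle
    exact top_le_iff.mp hle
  have transfer : ∀ (l : ℕ) (a b : FreeAlgebra k (Fin g)),
      mkC Y l a = mkC Y l b →
      RingQuot.mkAlgHom k (qRel Y (l + 1)) a = RingQuot.mkAlgHom k (qRel Y (l + 1)) b := by
    intro l a b hab
    exact RingQuot.mkAlgHom_rel k ((mkC_eq_iff Y l).mp hab)
  set E : ∀ l : ℕ, Fin s → Fin s → Qt Y l :=
    fun l i j => RingQuot.mkAlgHom k (qRel Y (l + 1)) (muRep Y hsurj l i j) with hE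
  have hproj : ∀ {l m : ℕ} (h : l ≤ m) (i j : Fin s), projQ Y h (E m i j) = E l i j := by
    intro l m h i j
    rw [hE]
    simp only [projQ]
    rw [RingQuot.liftAlgHom_mkAlgHom_apply]
    exact transfer l _ _ ((muSys_down Y hsurj h i j _ (muRep_spec Y hsurj m i j)).trans
      (muRep_spec Y hsurj l i j).symm)
  have hmulE : ∀ (l : ℕ) (i j p q : Fin s),
      E l i j * E l p q = if j = p then E l i q else 0 := by
    intro l i j p q
    rw [hE]
    simp only
    rw [← map_mul, transfer l _ _ (muRep_rel_mul Y hsurj l i j p q)]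
    by_cases hjp : j = p <;> simp [hjp]
  have honeE : ∀ l : ℕ, (∑ i, E l i i) = 1 := by
    intro l
    rw [hE]
    simp only
    rw [← map_sum, transfer l _ _ (muRep_rel_one Y hsurj l), map_one]
  set EE : Fin s → Fin s → InvLim Y :=
    fun i j => ⟨fun l => E l i j, fun l m h => hproj h i j⟩ with hEE
  have hmulEE : ∀ i j p q, EE i j * EE p q = if j = p then EE i q else 0 := by
    intro i j p q
    by_cases hjp : j = p
    · subst hjp
      rw [if_pos rfl]
      apply Subtype.ext
      funext l
      show (E l i j * E l j q : Qt Y l) = E l i q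
      rw [hmulE l i j j q, if_pos rfl]
    · rw [if_neg hjp]
      apply Subtype.ext
      funext l
      show (E l i j * E l p q : Qt Y l) = 0
      rw [hmulE l i j p q, if_neg hjp]
  have honeEE : (∑ i, EE i i) = 1 := by
    apply Subtype.ext
    funext l
    calc ((∑ i, EE i i : InvLim Y) : ∀ m, Qt Y m) l = ∑ i, E l i i := by
          rw [AddSubmonoidClass.coe_finset_sum]
          simp [hEE]
      _ = 1 := honeE l
  obtain ⟨A, instR, instAlg, ⟨iso⟩⟩ := exists_matrix_iso_of_matrixUnits k EE hmulEE honeEE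
  exact ⟨A, instR, instAlg, ⟨iso⟩⟩

end NCPaper
end

section
/- Density lemma for bimodule homomorphisms (Lemma 6.6): Let k be a field of characteristic 0, let C be a finite-dimensional semisimple k-algebra, and let U, V be finite-dimensional C-bimodules. Let 𝒯 be a k-subspace of Hom_{C-C}(U,V) such that: (1) for every nonzero u ∈ U there exists T ∈ 𝒯 with T(u) ≠ 0; and (2) Φ ∘ T ∈ 𝒯 for every Φ ∈ End_{C-C}(V) and every T ∈ 𝒯. Then 𝒯 = Hom_{C-C}(U,V). -/
theorem my_nilpotent_of_trace_pow {k : Type*} [Field k] [CharZero k] :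
    ∀ (d : ℕ) (E : Type u) [AddCommGroup E] [Module k E] [FiniteDimensional k E]
      (f : E →ₗ[k] E), Module.finrank k E ≤ d →
      (∀ n : ℕ, 1 ≤ n → LinearMap.trace k E (f ^ n) = 0) → IsNilpotent f := by
  intro d
  induction d with
  | zero =>
    intro E _ _ _ f hd _
    have h0 : Module.finrank k E = 0 := Nat.le_zero.mp hd
    have : Subsingleton E := Module.finrank_zero_iff.mp h0
    exact ⟨1, by rw [pow_one]; ext x; simp [Subsingleton.elim x 0]⟩
  | succ d ih =>
    intro E _ _ _ f hd htr
    by_cases hE : Module.finrank k E = 0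
    · have : Subsingleton E := Module.finrank_zero_iff.mp hE
      exact ⟨1, by rw [pow_one]; ext x; simp [Subsingleton.elim x 0]⟩
    -- constant coefficient of charpoly is zero
    have hc0 : Polynomial.constantCoeff (LinearMap.charpoly f) = 0 := by
      have h := congrArg (LinearMap.trace k E) (LinearMap.aeval_self_charpoly f)
      rw [Polynomial.aeval_eq_sum_range, map_sum, map_zero] at h
      rw [Finset.sum_eq_single 0 (fun i _ hi => by
            rw [map_smul, htr i (Nat.one_le_iff_ne_zero.mpr hi), smul_zero])
          (by simp)] at h
      rw [pow_zero, map_smul, LinearMap.trace_one, smul_eq_mul, mul_eq_zero] at h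
      rcases h with h | h
      · simpa [Polynomial.constantCoeff_apply] using h
      · exact absurd (Nat.cast_injective (h.trans (Nat.cast_zero).symm)) hE
    obtain ⟨v, hv0, hfv⟩ := (LinearMap.charpoly_constantCoeff_eq_zero_iff f).mp hc0
    -- the range of f has smaller dimension
    have hkerpos : 0 < Module.finrank k (LinearMap.ker f) := by
      rw [Module.finrank_pos_iff]
      exact ⟨⟨⟨v, LinearMap.mem_ker.mpr hfv⟩, 0, by simpa using hv0⟩⟩
    have hrange : Module.finrank k (LinearMap.range f) ≤ d := by
      have := LinearMap.finrank_range_add_finrank_ker f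
      omega
    set E' := LinearMap.range f with hE'
    have hmaps : ∀ x ∈ E', f x ∈ E' := fun x _ => ⟨x, rfl⟩
    set g := f.restrict hmaps with hgdef
    have hg : ∀ (n : ℕ) (x : E'), ((g ^ n) x : E) = (f ^ n) (x : E) := by
      intro n
      induction n with
      | zero => intro x; simp
      | succ n ihn =>
        intro x
        rw [pow_succ', pow_succ', Module.End.mul_apply, Module.End.mul_apply, hgdef,
          LinearMap.restrict_coe_apply, ihn x]
    have htr' : ∀ n : ℕ, 1 ≤ n → LinearMap.trace k E' (g ^ n) = 0 := by
      intro n hn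
      obtain ⟨m, rfl⟩ := Nat.exists_eq_add_of_le hn
      have key : g ^ (1 + m) = (f.rangeRestrict ∘ₗ (f ^ m)) ∘ₗ E'.subtype := by
        ext x
        rw [LinearMap.comp_apply, LinearMap.comp_apply]
        rw [hg (1 + m) x, LinearMap.rangeRestrict, LinearMap.codRestrict_apply,
          pow_add, pow_one, Module.End.mul_apply, Submodule.coe_subtype]
      rw [key, LinearMap.trace_comp_comm']
      have key2 : E'.subtype ∘ₗ (f.rangeRestrict ∘ₗ (f ^ m)) = f ^ (1 + m) := by
        ext x
        rw [LinearMap.comp_apply, LinearMap.comp_apply, LinearMap.rangeRestrict,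
          Submodule.coe_subtype, LinearMap.codRestrict_apply, pow_add, pow_one,
          Module.End.mul_apply]
      rw [key2]
      exact htr (1 + m) hn
    obtain ⟨n, hgn⟩ := ih E' g hrange htr'
    refine ⟨n + 1, ?_⟩
    ext x
    have : (f ^ (n + 1)) x = (f ^ n) (f x) := by rw [pow_succ, Module.End.mul_apply]
    rw [LinearMap.zero_apply, this]
    have hx : f x ∈ E' := ⟨x, rfl⟩
    have := hg n ⟨f x, hx⟩
    rw [hgn] at this
    simpa using this.symm



section TraceForm

variable (k : Type*) [Field k] (D : Type*) [Ring D] [Algebra k D]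

/-- The linear functional `x ↦ tr (y ↦ x * y)` on a finite-dimensional algebra. -/
noncomputable def tfl : D →ₗ[k] k :=
  (LinearMap.trace k D) ∘ₗ (Algebra.lmul k D).toLinearMap

variable {k D}

lemma tfl_apply (x : D) : tfl k D x = LinearMap.trace k D (Algebra.lmul k D x) := rfl

lemma tfl_comm (x y : D) : tfl k D (x * y) = tfl k D (y * x) := by
  rw [tfl_apply, tfl_apply, map_mul (Algebra.lmul k D), map_mul (Algebra.lmul k D),
    LinearMap.trace_mul_comm]

variable [FiniteDimensional k D]

lemma tfl_isNilpotent [CharZero k] {x : D} (hx : ∀ y : D, tfl k D (x * y) = 0) :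
    IsNilpotent x := by
  have htr : ∀ n : ℕ, 1 ≤ n → LinearMap.trace k D ((Algebra.lmul k D x) ^ n) = 0 := by
    intro n hn
    obtain ⟨m, rfl⟩ := Nat.exists_eq_add_of_le hn
    rw [← map_pow, ← tfl_apply, pow_add, pow_one]
    exact hx (x ^ m)
  obtain ⟨n, hn⟩ := my_nilpotent_of_trace_pow (Module.finrank k D) D
    (Algebra.lmul k D x) le_rfl htr
  refine ⟨n, ?_⟩
  have : (Algebra.lmul k D (x ^ n)) 1 = 0 := by rw [map_pow, hn]; rfl
  simpa using this

/-- In a (left-)semisimple ring, a left ideal consisting of nilpotent elements is trivial. -/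
lemma nil_ideal_eq_bot {R : Type*} [Ring R] [IsSemisimpleRing R] (I : Ideal R)
    (h : ∀ x ∈ I, IsNilpotent x) : I = ⊥ := by
  obtain ⟨e, he, hI⟩ := IsSemisimpleRing.ideal_eq_span_idempotent I
  have heI : e ∈ I := hI ▸ Ideal.subset_span rfl
  obtain ⟨n, hn⟩ := h e heI
  have he0 : e = 0 := by
    rcases Nat.eq_zero_or_pos n with rfl | hpos
    · rw [pow_zero] at hn
      calc e = e * 1 := (mul_one e).symm
      _ = 0 := by rw [hn, mul_zero]
    · obtain ⟨m, rfl⟩ := Nat.exists_eq_add_of_le hpos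
      rwa [Nat.add_comm, IsIdempotentElem.pow_succ_eq m he] at hn
  rw [hI, he0, Ideal.span_singleton_eq_bot.mpr rfl]

lemma tfl_nondeg [CharZero k] [IsSemisimpleRing D] {x : D}
    (hx : ∀ y : D, tfl k D (x * y) = 0) : x = 0 := by
  let I : Ideal D :=
    { carrier := {z | ∀ y : D, tfl k D (z * y) = 0}
      add_mem' := fun {a b} ha hb y => by rw [add_mul, map_add, ha y, hb y, add_zero]
      zero_mem' := fun y => by rw [zero_mul, map_zero]
      smul_mem' := fun c z hz y => by
        rw [smul_eq_mul, mul_assoc, tfl_comm, mul_assoc]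
        exact hz (y * c) }
  have hnil : ∀ z ∈ I, IsNilpotent z := fun z hz => tfl_isNilpotent hz
  have : I = ⊥ := nil_ideal_eq_bot I hnil
  have hxI : x ∈ I := hx
  rwa [this, Ideal.mem_bot] at hxI

/-- Nondegeneracy of the trace form on `Dᵐᵒᵖ` when `D` is semisimple. -/
lemma tfl_nondeg_op [CharZero k] [IsSemisimpleRing D] {x : Dᵐᵒᵖ}
    (hx : ∀ y : Dᵐᵒᵖ, tfl k Dᵐᵒᵖ (x * y) = 0) : x = 0 := by
  let I : Ideal D :=
    { carrier := {z | ∀ y : Dᵐᵒᵖ, tfl k Dᵐᵒᵖ (MulOpposite.op z * y) = 0}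
      add_mem' := fun {a b} ha hb y => by
        rw [MulOpposite.op_add, add_mul, map_add, ha y, hb y, add_zero]
      zero_mem' := fun y => by rw [MulOpposite.op_zero, zero_mul, map_zero]
      smul_mem' := fun c z hz y => by
        rw [smul_eq_mul, MulOpposite.op_mul, mul_assoc]
        exact hz (MulOpposite.op c * y) }
  have hnil : ∀ z ∈ I, IsNilpotent z := by
    intro z hz
    have : IsNilpotent (MulOpposite.op z) := tfl_isNilpotent hz
    obtain ⟨n, hn⟩ := this
    exact ⟨n, by rwa [← MulOpposite.op_pow, MulOpposite.op_eq_zero_iff] at hn⟩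
  have hbot : I = ⊥ := nil_ideal_eq_bot I hnil
  have hxI : MulOpposite.unop x ∈ I := by
    intro y
    rw [MulOpposite.op_unop]
    exact hx y
  rw [hbot, Ideal.mem_bot] at hxI
  rw [← MulOpposite.op_unop x, hxI, MulOpposite.op_zero]

end TraceForm

section Casimir

variable {k : Type*} [Field k] {D : Type*} [Ring D] [Algebra k D] [FiniteDimensional k D]

/-- Existence of dual bases for the regular trace form, together with the Casimir
element identity `∑ xᵢ yᵢ = 1`. -/
lemma exists_dual_pair (hnd : ∀ x : D, (∀ y : D, tfl k D (x * y) = 0) → x = 0) :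
    ∃ (n : ℕ) (X Y : Fin n → D),
      (∀ v : D, ∑ i, tfl k D (v * Y i) • X i = v) ∧
      (∀ v : D, ∑ i, tfl k D (v * X i) • Y i = v) ∧
      (∑ i, X i * Y i = 1) := by
  classical
  set B : LinearMap.BilinForm k D := (LinearMap.mul k D).compr₂ (tfl k D) with hBdef
  have hB_apply : ∀ x y : D, B x y = tfl k D (x * y) := fun x y => rfl
  have hB : B.Nondegenerate :=
    ⟨fun x hx => hnd x fun y => hx y, fun y hy => hnd y fun x => by rw [tfl_comm]; exact hy x⟩
  set b : Module.Basis (Fin (Module.finrank k D)) k D := Module.finBasis k D with hbdef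
  set y : Module.Basis (Fin (Module.finrank k D)) k D := B.dualBasis hB b with hydef
  have hyb : ∀ i j, B (y i) (b j) = if j = i then 1 else 0 :=
    fun i j => LinearMap.BilinForm.apply_dualBasis_left hB b i j
  have hby : ∀ i j, B (b i) (y j) = if i = j then 1 else 0 := by
    intro i j
    rw [hB_apply, tfl_comm, ← hB_apply, hyb]
  have repr_y : ∀ (v : D) i, y.repr v i = tfl k D (v * b i) := fun v i =>
    LinearMap.BilinForm.dualBasis_repr_apply hB b v i
  have repr_b : ∀ (v : D) i, b.repr v i = tfl k D (v * y i) := by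
    intro v i
    rw [← hB_apply]
    conv_rhs => rw [← b.sum_repr v]
    rw [map_sum, LinearMap.sum_apply]
    simp only [map_smul, LinearMap.smul_apply, hby, smul_eq_mul, mul_ite, mul_one, mul_zero]
    rw [Finset.sum_ite_eq' Finset.univ i fun j => b.repr v j]
    simp
  refine ⟨Module.finrank k D, b, y, ?_, ?_, ?_⟩
  · intro v
    conv_rhs => rw [← b.sum_repr v]
    exact Finset.sum_congr rfl fun i _ => by rw [repr_b]
  · intro v
    conv_rhs => rw [← y.sum_repr v]
    exact Finset.sum_congr rfl fun i _ => by rw [repr_y]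
  · -- Casimir element is 1
    have htr : ∀ a : D, tfl k D a = ∑ i, b.repr (a * b i) i := by
      intro a
      rw [tfl_apply, LinearMap.trace_eq_matrix_trace k b, Matrix.trace]
      refine Finset.sum_congr rfl fun i _ => ?_
      rw [Matrix.diag_apply, LinearMap.toMatrix_apply]
      congr 1
    have key : ∀ a : D, tfl k D (((∑ i, b i * y i) - 1) * a) = 0 := by
      intro a
      rw [sub_mul, map_sub, one_mul, Finset.sum_mul, map_sum]
      have : ∀ i : Fin (Module.finrank k D),
          tfl k D (b i * y i * a) = b.repr (a * b i) i := by
        intro i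
        rw [tfl_comm, ← mul_assoc, repr_b]
      rw [Finset.sum_congr rfl fun i _ => this i, ← htr a, sub_self]
    have := hnd _ key
    rwa [sub_eq_zero] at this

/-- Casimir swap identity. -/
lemma casimir_swap {n : ℕ} {X Y : Fin n → D}
    (hX : ∀ v : D, ∑ i, tfl k D (v * Y i) • X i = v)
    (hY : ∀ v : D, ∑ i, tfl k D (v * X i) • Y i = v)
    {M : Type*} [AddCommGroup M] [Module k M]
    (F : D →ₗ[k] D →ₗ[k] M) (d : D) :
    ∑ i, F (d * X i) (Y i) = ∑ i, F (X i) (Y i * d) := by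
  have lhs : ∑ i, F (d * X i) (Y i)
      = ∑ i, ∑ j, tfl k D (d * X i * Y j) • F (X j) (Y i) := by
    refine Finset.sum_congr rfl fun i _ => ?_
    conv_lhs => rw [← hX (d * X i)]
    rw [map_sum, LinearMap.sum_apply]
    exact Finset.sum_congr rfl fun j _ => by rw [map_smul, LinearMap.smul_apply]
  have rhs : ∑ i, F (X i) (Y i * d)
      = ∑ i, ∑ j, tfl k D (Y i * d * X j) • F (X i) (Y j) := by
    refine Finset.sum_congr rfl fun i _ => ?_
    conv_lhs => rw [← hY (Y i * d)]
    rw [map_sum]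
    exact Finset.sum_congr rfl fun j _ => by rw [map_smul]
  rw [lhs, rhs, Finset.sum_comm]
  refine Finset.sum_congr rfl fun j _ => Finset.sum_congr rfl fun i _ => ?_
  congr 1
  rw [tfl_comm, ← mul_assoc]

end Casimir

section Averaging

variable {k : Type*} [Field k] {D : Type*} [Ring D] [Algebra k D] [FiniteDimensional k D]

/-- Maschke-type averaging: from a `k`-linear projection onto a `D`-stable subspace,
produce a `D`-linear one. -/
lemma averaging (hnd : ∀ x : D, (∀ y : D, tfl k D (x * y) = 0) → x = 0)
    {M : Type*} [AddCommGroup M] [Module k M] [Module D M] [IsScalarTower k D M]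
    (W : Submodule k M) (hW : ∀ (d : D) (w : M), w ∈ W → d • w ∈ W)
    (p : M →ₗ[k] M) (hpW : ∀ m, p m ∈ W) (hpid : ∀ w ∈ W, p w = w) :
    ∃ q : M →ₗ[k] M, (∀ (d : D) (m : M), q (d • m) = d • q m) ∧ (∀ m, q m ∈ W) ∧
      (∀ w ∈ W, q w = w) ∧
      ∀ g : M →ₗ[k] M, (∀ (d : D) (m : M), g (d • m) = d • g m) →
        (∀ m, g (p m) = p (g m)) → ∀ m, g (q m) = q (g m) := by
  haveI : SMulCommClass D k M := ⟨fun d a m => by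
    calc d • a • m = d • (a • (1 : D)) • m := by rw [smul_assoc, one_smul]
      _ = (d * (a • (1 : D))) • m := (mul_smul _ _ _).symm
      _ = (a • (d * 1)) • m := by rw [Algebra.mul_smul_comm]
      _ = (a • d) • m := by rw [mul_one]
      _ = a • d • m := smul_assoc a d m⟩
  obtain ⟨n, X, Y, hX, hY, hone⟩ := exists_dual_pair hnd
  let act : D → (M →ₗ[k] M) := fun d =>
    { toFun := fun m => d • m
      map_add' := fun m₁ m₂ => smul_add d m₁ m₂
      map_smul' := fun a m => smul_comm d a m }
  refine ⟨∑ i, (act (X i)) ∘ₗ p ∘ₗ (act (Y i)), ?_, ?_, ?_, ?_⟩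
  · intro d m
    have happ : ∀ m' : M, (∑ i, (act (X i)) ∘ₗ p ∘ₗ (act (Y i))) m'
        = ∑ i, X i • p (Y i • m') := by
      intro m'
      rw [LinearMap.sum_apply]
      rfl
    rw [happ, happ]
    let F : D →ₗ[k] D →ₗ[k] M := LinearMap.mk₂ k (fun u v => u • p (v • m))
      (fun u₁ u₂ v => add_smul u₁ u₂ _)
      (fun a u v => smul_assoc a u _)
      (fun u v₁ v₂ => by
        show u • p ((v₁ + v₂) • m) = u • p (v₁ • m) + u • p (v₂ • m)
        rw [add_smul, map_add, smul_add])
      (fun a u v => by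
        show u • p ((a • v) • m) = a • (u • p (v • m))
        rw [smul_assoc, map_smul, smul_comm])
    have hF : ∀ u v : D, F u v = u • p (v • m) := fun u v => rfl
    calc ∑ i, X i • p (Y i • d • m) = ∑ i, F (X i) (Y i * d) := by
          refine Finset.sum_congr rfl fun i _ => ?_
          rw [hF, mul_smul]
      _ = ∑ i, F (d * X i) (Y i) := (casimir_swap hX hY F d).symm
      _ = d • ∑ i, X i • p (Y i • m) := by
          rw [Finset.smul_sum]
          refine Finset.sum_congr rfl fun i _ => ?_
          rw [hF, mul_smul]
  · intro m
    rw [LinearMap.sum_apply]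
    refine Submodule.sum_mem W fun i _ => ?_
    exact hW (X i) _ (hpW _)
  · intro w hw
    rw [LinearMap.sum_apply]
    have : ∀ i : Fin n, ((act (X i)) ∘ₗ p ∘ₗ (act (Y i))) w = (X i * Y i) • w := by
      intro i
      show X i • p (Y i • w) = (X i * Y i) • w
      rw [hpid _ (hW (Y i) w hw), mul_smul]
    rw [Finset.sum_congr rfl fun i _ => this i, ← Finset.sum_smul, hone, one_smul]
  · intro g hgD hgp m
    rw [LinearMap.sum_apply, LinearMap.sum_apply, map_sum]
    refine Finset.sum_congr rfl fun i _ => ?_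
    show g (X i • p (Y i • m)) = X i • p (Y i • g m)
    rw [hgD, hgp, hgD]

end Averaging

/-- **Density lemma for bimodule homomorphisms** (Lemma 6.6).  Let `C` be a
finite-dimensional semisimple algebra over a field `k` of characteristic 0, and let `U`, `V`
be finite-dimensional `C`-bimodules (left `C`- and right `C`-module structures, the right one
recorded as a `Cᵐᵒᵖ`-action, commuting with each other and compatible with the `k`-structure).
If a `k`-subspace `T` of bimodule homomorphisms `U → V` separates the points of `U` and is
stable under postcomposition with bimodule endomorphisms of `V`, then `T` contains every
bimodule homomorphism `U → V`. -/
theorem density_lemma_for_bimodule_homs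
    {k : Type*} [Field k] [CharZero k]
    (C : Type*) [Ring C] [Algebra k C] [FiniteDimensional k C] [IsSemisimpleRing C]
    (U : Type*) [AddCommGroup U] [Module k U] [Module C U] [Module Cᵐᵒᵖ U]
    [SMulCommClass C Cᵐᵒᵖ U] [IsScalarTower k C U] [IsScalarTower k Cᵐᵒᵖ U]
    [FiniteDimensional k U]
    (V : Type*) [AddCommGroup V] [Module k V] [Module C V] [Module Cᵐᵒᵖ V]
    [SMulCommClass C Cᵐᵒᵖ V] [IsScalarTower k C V] [IsScalarTower k Cᵐᵒᵖ V]
    [FiniteDimensional k V]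
    (T : Submodule k (U →ₗ[k] V))
    (hT : ∀ f ∈ T, (∀ (c : C) (u : U), f (c • u) = c • f u) ∧
      (∀ (c : Cᵐᵒᵖ) (u : U), f (c • u) = c • f u))
    (hsep : ∀ u : U, u ≠ 0 → ∃ f ∈ T, f u ≠ 0)
    (hstable : ∀ Φ : V →ₗ[k] V, (∀ (c : C) (v : V), Φ (c • v) = c • Φ v) →
      (∀ (c : Cᵐᵒᵖ) (v : V), Φ (c • v) = c • Φ v) → ∀ f ∈ T, Φ ∘ₗ f ∈ T) :
    ∀ f : U →ₗ[k] V, (∀ (c : C) (u : U), f (c • u) = c • f u) →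
      (∀ (c : Cᵐᵒᵖ) (u : U), f (c • u) = c • f u) → f ∈ T := by
  intro f hfC hfO
  classical
  -- a finite basis of `T`
  set m := Module.finrank k ↥T with hm
  set bT : Module.Basis (Fin m) k ↥T := Module.finBasis k ↥T with hbT
  set F : Fin m → (U →ₗ[k] V) := fun i => (bT i : U →ₗ[k] V) with hF
  have hFmem : ∀ i, F i ∈ T := fun i => (bT i).2
  have hFC : ∀ i (c : C) (u : U), F i (c • u) = c • F i u := fun i => (hT _ (hFmem i)).1
  have hFO : ∀ i (c : Cᵐᵒᵖ) (u : U), F i (c • u) = c • F i u := fun i => (hT _ (hFmem i)).2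
  set Θ : U →ₗ[k] (Fin m → V) := LinearMap.pi F with hΘdef
  have hΘapp : ∀ (u : U) i, Θ u i = F i u := fun u i => rfl
  -- every element of T vanishing criterion & injectivity of Θ
  have hinj : Function.Injective Θ := by
    rw [injective_iff_map_eq_zero]
    intro u hu
    by_contra hne
    obtain ⟨f0, hf0T, hf0⟩ := hsep u hne
    apply hf0
    set t : ↥T := ⟨f0, hf0T⟩ with ht
    have h1 : f0 = T.subtype t := rfl
    have h2 : t = ∑ i, bT.repr t i • bT i := (bT.sum_repr t).symm
    rw [h1, h2, map_sum]
    rw [LinearMap.sum_apply]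
    refine Finset.sum_eq_zero fun i _ => ?_
    rw [map_smul, LinearMap.smul_apply]
    have hFi : F i u = 0 := by
      have := congrFun (congrArg (fun g => (g : Fin m → V)) hu) i
      simpa [hΘapp] using this
    show bT.repr t i • F i u = 0
    rw [hFi, smul_zero]
  have hΘC : ∀ (c : C) (u : U), Θ (c • u) = c • Θ u := by
    intro c u; funext i
    rw [hΘapp, hFC, Pi.smul_apply, hΘapp]
  have hΘO : ∀ (c : Cᵐᵒᵖ) (u : U), Θ (c • u) = c • Θ u := by
    intro c u; funext i
    rw [hΘapp, hFO, Pi.smul_apply, hΘapp]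
  -- the range of Θ, a stable subspace
  set W : Submodule k (Fin m → V) := LinearMap.range Θ with hWdef
  have hWC : ∀ (c : C) (w : Fin m → V), w ∈ W → c • w ∈ W := by
    rintro c w ⟨u, rfl⟩
    exact ⟨c • u, hΘC c u⟩
  have hWO : ∀ (c : Cᵐᵒᵖ) (w : Fin m → V), w ∈ W → c • w ∈ W := by
    rintro c w ⟨u, rfl⟩
    exact ⟨c • u, hΘO c u⟩
  -- a k-linear projection onto W
  obtain ⟨W', hW'⟩ := Submodule.exists_isCompl W
  set p : (Fin m → V) →ₗ[k] (Fin m → V) := W.subtype ∘ₗ (W.linearProjOfIsCompl W' hW') with hpdef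
  have hpW : ∀ x, p x ∈ W := fun x => (W.linearProjOfIsCompl W' hW' x).2
  have hpid : ∀ w ∈ W, p w = w := by
    intro w hw
    show ((W.linearProjOfIsCompl W' hW') w : Fin m → V) = w
    rw [show w = ((⟨w, hw⟩ : W) : Fin m → V) from rfl]
    exact congrArg Subtype.val (Submodule.linearProjOfIsCompl_apply_left hW' _)
  -- nondegeneracy of the two trace forms
  have hndC : ∀ x : C, (∀ y : C, tfl k C (x * y) = 0) → x = 0 := fun x hx => tfl_nondeg hx
  haveI : FiniteDimensional k Cᵐᵒᵖ :=
    Module.Finite.equiv (MulOpposite.opLinearEquiv k : C ≃ₗ[k] Cᵐᵒᵖ)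
  have hndO : ∀ x : Cᵐᵒᵖ, (∀ y : Cᵐᵒᵖ, tfl k Cᵐᵒᵖ (x * y) = 0) → x = 0 :=
    fun x hx => tfl_nondeg_op hx
  -- averaging, first over C, then over Cᵐᵒᵖ
  obtain ⟨q₁, hq₁C, hq₁W, hq₁id, hq₁comm⟩ := averaging hndC W hWC p hpW hpid
  obtain ⟨q, hqO, hqW, hqid, hqcomm⟩ := averaging hndO W hWO q₁ hq₁W hq₁id
  -- q is also C-linear
  haveI : SMulCommClass C k V := ⟨fun d a m => by
    calc d • a • m = d • (a • (1 : C)) • m := by rw [smul_assoc, one_smul]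
      _ = (d * (a • (1 : C))) • m := (mul_smul _ _ _).symm
      _ = (a • (d * 1)) • m := by rw [Algebra.mul_smul_comm]
      _ = (a • d) • m := by rw [mul_one]
      _ = a • d • m := smul_assoc a d m⟩
  have hqC : ∀ (c : C) (x : Fin m → V), q (c • x) = c • q x := by
    intro c x
    set g : (Fin m → V) →ₗ[k] (Fin m → V) :=
      { toFun := fun z => c • z
        map_add' := fun z₁ z₂ => smul_add c z₁ z₂
        map_smul' := fun a z => smul_comm c a z } with hg
    have h1 : ∀ (d : Cᵐᵒᵖ) (z : Fin m → V), g (d • z) = d • g z :=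
      fun d z => smul_comm c d z
    have h2 : ∀ z, g (q₁ z) = q₁ (g z) := fun z => (hq₁C c z).symm
    exact (hqcomm g h1 h2 x).symm
  -- the inverse of Θ on W, postcomposed with q
  set e : U ≃ₗ[k] W := LinearEquiv.ofInjective Θ hinj with he
  set Ψ : (Fin m → V) →ₗ[k] U := e.symm.toLinearMap ∘ₗ (LinearMap.codRestrict W q hqW)
    with hΨdef
  have hesymm : ∀ w : W, Θ (e.symm w) = (w : Fin m → V) := by
    intro w
    conv_rhs => rw [← e.apply_symm_apply w]
    rw [he, LinearEquiv.ofInjective_apply]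
  have hΨ : ∀ x, Θ (Ψ x) = q x := by
    intro x
    rw [hΨdef]
    show Θ (e.symm ((LinearMap.codRestrict W q hqW) x)) = q x
    rw [hesymm, LinearMap.codRestrict_apply]
  have hΨΘ : ∀ u, Ψ (Θ u) = u := fun u => hinj (by rw [hΨ]; exact hqid (Θ u) ⟨u, rfl⟩)
  have hΨC : ∀ (c : C) x, Ψ (c • x) = c • Ψ x :=
    fun c x => hinj (by rw [hΨ, hqC, hΘC, hΨ])
  have hΨO : ∀ (c : Cᵐᵒᵖ) x, Ψ (c • x) = c • Ψ x :=
    fun c x => hinj (by rw [hΨ, hqO, hΘO, hΨ])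
  -- the component maps
  set Φ : Fin m → (V →ₗ[k] V) :=
    fun i => f ∘ₗ Ψ ∘ₗ (LinearMap.single k (fun _ => V) i) with hΦ
  have hΦapp : ∀ i (v : V), Φ i v = f (Ψ (Pi.single i v)) := fun i v => rfl
  have hΦC : ∀ i (c : C) (v : V), Φ i (c • v) = c • Φ i v := by
    intro i c v
    rw [hΦapp, hΦapp, ← hfC, ← hΨC]
    congr 2
    funext j
    rw [Pi.smul_apply, Pi.single_apply, Pi.single_apply, smul_ite, smul_zero]
  have hΦO : ∀ i (c : Cᵐᵒᵖ) (v : V), Φ i (c • v) = c • Φ i v := by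
    intro i c v
    rw [hΦapp, hΦapp, ← hfO, ← hΨO]
    congr 2
    funext j
    rw [Pi.smul_apply, Pi.single_apply, Pi.single_apply, smul_ite, smul_zero]
  have hΦmem : ∀ i, (Φ i) ∘ₗ (F i) ∈ T := fun i =>
    hstable (Φ i) (hΦC i) (hΦO i) (F i) (hFmem i)
  have key : f = ∑ i, (Φ i) ∘ₗ (F i) := by
    ext u
    rw [LinearMap.sum_apply]
    have h1 : ∀ i : Fin m, ((Φ i) ∘ₗ (F i)) u = f (Ψ (Pi.single i (F i u))) := fun i => rfl
    rw [Finset.sum_congr rfl fun i _ => h1 i, ← map_sum, ← map_sum]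
    congr 1
    have h2 : ∑ i, Pi.single i (F i u) = Θ u := Finset.univ_sum_single (Θ u)
    rw [h2, hΨΘ]
  rw [key]
  exact Submodule.sum_mem T fun i _ => hΦmem i
end

section
/- Growth lemma for doubly indexed sequences (Lemma 7.1): Let α, β > 0 be real numbers and let c_{ℓ,m} be nonnegative real numbers defined for integers ℓ ≥ 0 and −1 ≤ m ≤ ℓ, satisfying: c_{0,0} = 1; c_{ℓ,ℓ} = 0 and c_{ℓ,−1} = c_{ℓ,0} for all ℓ > 0; and c_{ℓ,m} ≤ β · max{ c_{ℓ,m+1}, α(c_{ℓ−1,m−1} + c_{ℓ−1,m}) } for all ℓ > 0 and −1 < m < ℓ. Then limsup_{ℓ→∞} (c_{ℓ,0})^{1/ℓ} < ∞; in other words, there exists a real constant M such that c_{ℓ,0} ≤ M^ℓ for all sufficiently large ℓ. -/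
/-- **Growth lemma for doubly indexed sequences** (Lemma 7.1).  Let `α, β > 0` and let
`c ℓ m` (defined for `ℓ ≥ 0` and `-1 ≤ m ≤ ℓ`) be nonnegative reals with `c 0 0 = 1`,
`c ℓ ℓ = 0` and `c ℓ (-1) = c ℓ 0` for `ℓ > 0`, satisfying the recursive bound
`c ℓ m ≤ β * max (c ℓ (m+1)) (α * (c (ℓ-1) (m-1) + c (ℓ-1) m))` for `-1 < m < ℓ`.  Then
`limsup (c ℓ 0)^{1/ℓ} < ∞`; that is, there is a real `M` with `c ℓ 0 ≤ M ^ ℓ` for all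
sufficiently large `ℓ`. -/
theorem growth_lemma_doubly_indexed
    (α β : ℝ) (hα : 0 < α) (hβ : 0 < β)
    (c : ℕ → ℤ → ℝ)
    (hnn : ∀ (ℓ : ℕ) (m : ℤ), -1 ≤ m → m ≤ (ℓ : ℤ) → 0 ≤ c ℓ m)
    (h00 : c 0 0 = 1)
    (hdiag : ∀ ℓ : ℕ, 0 < ℓ → c ℓ (ℓ : ℤ) = 0)
    (hneg : ∀ ℓ : ℕ, 0 < ℓ → c ℓ (-1) = c ℓ 0)
    (hrec : ∀ (ℓ : ℕ), 0 < ℓ → ∀ m : ℤ, -1 < m → m < (ℓ : ℤ) →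
      c ℓ m ≤ β * max (c ℓ (m + 1)) (α * (c (ℓ - 1) (m - 1) + c (ℓ - 1) m))) :
    ∃ M : ℝ, ∀ᶠ ℓ : ℕ in Filter.atTop, c ℓ 0 ≤ M ^ ℓ := by
  set b : ℝ := max β 1 with hbdef
  have hb1 : (1:ℝ) ≤ b := le_max_right _ _
  have hb0 : (0:ℝ) < b := lt_of_lt_of_le one_pos hb1
  have hβb : β ≤ b := le_max_left _ _
  set C : ℝ := max (c 0 (-1)) 1 with hCdef
  have hC1 : (1:ℝ) ≤ C := le_max_right _ _
  have hC0 : (0:ℝ) < C := lt_of_lt_of_le one_pos hC1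
  set K : ℝ := max (2*α*b) 1 with hKdef
  have hK1 : (1:ℝ) ≤ K := le_max_right _ _
  have hK0 : (0:ℝ) < K := lt_of_lt_of_le one_pos hK1
  have hK2 : 2*α*b ≤ K := le_max_left _ _
  have key : ∀ ℓ : ℕ, ∀ m : ℤ, -1 ≤ m → m ≤ (ℓ:ℤ) →
      c ℓ m ≤ C * b ^ ((ℓ:ℤ) - m) * K ^ ℓ := by
    intro ℓ
    induction ℓ with
    | zero =>
      intro m hm1 hm2
      simp only [Nat.cast_zero, pow_zero, mul_one]
      interval_cases m
      · calc c 0 (-1) ≤ C := le_max_left _ _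
          _ ≤ C * b ^ ((0:ℤ) - (-1)) := le_mul_of_one_le_right hC0.le (by simpa using hb1)
      · calc c 0 0 = 1 := h00
          _ ≤ C := hC1
          _ ≤ C * b ^ ((0:ℤ) - 0) := le_mul_of_one_le_right hC0.le (by simp)
    | succ n ih =>
      have hnpos : 0 < n + 1 := Nat.succ_pos n
      have inner : ∀ k : ℕ, ∀ m : ℤ, -1 ≤ m → m ≤ ((n+1:ℕ):ℤ) →
          ((n+1:ℕ):ℤ) - m ≤ (k:ℤ) →
          c (n+1) m ≤ C * b ^ (((n+1:ℕ):ℤ) - m) * K ^ (n+1) := by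
        intro k
        induction k with
        | zero =>
          intro m hm1 hm2 hmk
          have hm : m = ((n+1:ℕ):ℤ) := by push_cast at hm2 hmk ⊢; omega
          rw [hm, hdiag (n+1) hnpos]
          positivity
        | succ k ihk =>
          intro m hm1 hm2 hmk
          rcases eq_or_lt_of_le hm2 with hm | hm
          · rw [hm, hdiag (n+1) hnpos]
            positivity
          rcases eq_or_lt_of_le hm1 with hm0 | hm0
          · -- m = -1
            have h0 : c (n+1) 0 ≤ C * b ^ (((n+1:ℕ):ℤ) - 0) * K ^ (n+1) := by
              apply ihk 0 (by norm_num) (by push_cast; omega)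
              push_cast at hmk ⊢; omega
            rw [← hm0, hneg (n+1) hnpos]
            refine h0.trans ?_
            gcongr
            · norm_num
          · -- -1 < m < n+1
            have hrec' := hrec (n+1) hnpos m hm0 (by push_cast at hm ⊢; omega)
            have hsub : (n + 1) - 1 = n := by omega
            rw [hsub] at hrec'
            set E : ℝ := b ^ (((n:ℕ):ℤ) - m) with hEdef
            have hE0 : 0 < E := zpow_pos hb0 _
            set D : ℝ := C * E * K ^ n with hDdef
            have hD0 : 0 < D := by positivity
            have hbE : b ^ (((n+1:ℕ):ℤ) - m) = b * E := by
              rw [hEdef, show (((n+1:ℕ):ℤ) - m) = (((n:ℕ):ℤ) - m) + 1 by push_cast; ring,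
                zpow_add_one₀ hb0.ne']
              ring
            have hcm : c n m ≤ D := by
              have := ih m hm1 (by push_cast at hm ⊢; omega)
              rw [hDdef]; exact this
            have hcm1 : c n (m-1) ≤ b * D := by
              have h := ih (m-1) (by omega) (by push_cast at hm ⊢; omega)
              have heq : C * b ^ (((n:ℕ):ℤ) - (m-1)) * K ^ n = b * D := by
                rw [hDdef, hEdef, show ((n:ℕ):ℤ) - (m-1) = (((n:ℕ):ℤ) - m) + 1 by ring,
                  zpow_add_one₀ hb0.ne']
                ring
              exact heq ▸ h
            have hcup : c (n+1) (m+1) ≤ D * K := by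
              have h := ihk (m+1) (by omega) (by push_cast at hm ⊢; omega)
                (by push_cast at hmk ⊢; omega)
              have heq : C * b ^ (((n+1:ℕ):ℤ) - (m+1)) * K ^ (n+1) = D * K := by
                rw [hDdef, hEdef, show ((n+1:ℕ):ℤ) - (m+1) = ((n:ℕ):ℤ) - m by push_cast; ring,
                  pow_succ]
                ring
              exact heq ▸ h
            have htarget : C * b ^ (((n+1:ℕ):ℤ) - m) * K ^ (n+1) = b * D * K := by
              rw [hbE, pow_succ, hDdef]; ring
            have h1 : β * c (n+1) (m+1) ≤ b * D * K := by
              have h0 : 0 ≤ c (n+1) (m+1) :=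
                hnn (n+1) (m+1) (by omega) (by push_cast at hm ⊢; omega)
              have := mul_le_mul hβb hcup h0 hb0.le
              nlinarith
            have h2 : β * (α * (c n (m-1) + c n m)) ≤ b * D * K := by
              have h0a : 0 ≤ c n (m-1) := hnn n (m-1) (by omega) (by push_cast at hm ⊢; omega)
              have h0b : 0 ≤ c n m := hnn n m hm1 (by push_cast at hm ⊢; omega)
              have hcm' : c n m ≤ b * D := hcm.trans (le_mul_of_one_le_left hD0.le hb1)
              have hs : α * (c n (m-1) + c n m) ≤ α * (b * D + b * D) :=
                mul_le_mul_of_nonneg_left (add_le_add hcm1 hcm') hα.le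
              have h0c : 0 ≤ α * (c n (m-1) + c n m) := by positivity
              have hstep : β * (α * (c n (m-1) + c n m)) ≤ b * (α * (b * D + b * D)) :=
                mul_le_mul hβb hs h0c hb0.le
              have hfin : b * (α * (b * D + b * D)) ≤ b * D * K := by
                have h3 : (2 * α * b) * (b * D) ≤ K * (b * D) :=
                  mul_le_mul_of_nonneg_right hK2 (by positivity)
                nlinarith
              linarith
            have hmax : β * max (c (n+1) (m+1)) (α * (c n (m-1) + c n m)) ≤ b * D * K := by
              rw [mul_max_of_nonneg _ _ hβ.le]
              exact max_le h1 h2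
            rw [htarget]
            exact le_trans hrec' hmax
      intro m hm1 hm2
      exact inner (n + 2) m hm1 hm2 (by push_cast; omega)
  refine ⟨C * b * K, ?_⟩
  filter_upwards [Filter.eventually_ge_atTop 1] with ℓ hℓ
  have h := key ℓ 0 (by norm_num) (by positivity)
  calc c ℓ 0 ≤ C * b ^ ((ℓ:ℤ) - 0) * K ^ ℓ := h
    _ = C * (b ^ ℓ * K ^ ℓ) := by
        rw [sub_zero, zpow_natCast]; ring
    _ ≤ C ^ ℓ * (b ^ ℓ * K ^ ℓ) := by
        apply mul_le_mul_of_nonneg_right (le_self_pow₀ hC1 (by omega))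
        positivity
    _ = (C * b * K) ^ ℓ := by rw [mul_pow, mul_pow]; ring
end

section
/- No nilpotents in the completed generic matrix algebra (key step of Proposition 3.1): Fix integers n, g ≥ 1 and let ĜM ⊆ M_n(ℂ[[ξ]]) be the completed generic matrix algebra. If f ∈ ĜM satisfies f^m = 0 for some m ≥ 1, then f = 0. -/
namespace NCGeneric

/-- The `g·n²` commuting indeterminates `ξ^k_{ij}`. -/
abbrev Vars (n g : ℕ) := Fin g × Fin n × Fin n

/-- The ring of formal power series `ℂ[[ξ]]`. -/
abbrev PS (n g : ℕ) := MvPowerSeries (Vars n g) ℂ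

/-- The polynomial ring `ℂ[ξ]`. -/
abbrev Poly (n g : ℕ) := MvPolynomial (Vars n g) ℂ

/-- The generic matrices `Ξ_k = (ξ^k_{ij})_{ij}`. -/
noncomputable def Xi (n g : ℕ) (kk : Fin g) : Matrix (Fin n) (Fin n) (Poly n g) :=
  fun i j => MvPolynomial.X (kk, i, j)

/-- The generic matrix algebra `GM`: the unital ℂ-subalgebra of `M_n(ℂ[ξ])` generated by
the generic matrices. -/
noncomputable def GM (n g : ℕ) : Subalgebra ℂ (Matrix (Fin n) (Fin n) (Poly n g)) :=
  Algebra.adjoin ℂ (Set.range (Xi n g))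

/-- Total degree of a monomial exponent. -/
def degOf {n g : ℕ} (e : Vars n g →₀ ℕ) : ℕ := e.sum fun _ m => m

/-- The degree-`d` homogeneous component of a power series. -/
noncomputable def homComp {n g : ℕ} (d : ℕ) (f : PS n g) : PS n g :=
  fun e => if degOf e = d then MvPowerSeries.coeff e f else 0

/-- The completed generic matrix algebra `ĜM ⊆ M_n(ℂ[[ξ]])`: all matrix power series each
of whose homogeneous components comes from the generic matrix algebra `GM`. -/
noncomputable def GMhat (n g : ℕ) : Set (Matrix (Fin n) (Fin n) (PS n g)) :=
  {f | ∀ d : ℕ, ∃ p ∈ GM n g,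
    (p.map fun q => (q : PS n g)) = Matrix.of fun i j => homComp d (f i j)}

set_option linter.unusedSectionVars false
set_option maxHeartbeats 1000000
open Fin.NatCast


section Cyclic

variable (n : ℕ) [NeZero n]

noncomputable def om : ℂ := Complex.exp (2 * Real.pi * Complex.I / n)

lemma hom_root : IsPrimitiveRoot (om n) n := Complex.isPrimitiveRoot_exp n (NeZero.ne n)

lemma om_pow_n : (om n) ^ n = 1 := (hom_root n).pow_eq_one

lemma om_ne_zero : om n ≠ 0 := Complex.exp_ne_zero _

lemma pow_congr_mod {M : Type*} [Monoid M] {x : M} (hx : x ^ n = 1) {a b : ℕ}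
    (h : a % n = b % n) : x ^ a = x ^ b := by
  have key : ∀ c : ℕ, x ^ c = x ^ (c % n) := by
    intro c
    conv_lhs => rw [← Nat.div_add_mod c n]
    rw [pow_add, pow_mul, hx, one_pow, one_mul]
  rw [key a, key b, h]

lemma finCast_congr {a b : ℕ} (h : a % n = b % n) : (a : Fin n) = (b : Fin n) := by
  apply Fin.ext
  rw [Fin.val_natCast, Fin.val_natCast, h]

/-- nonnegative residue of an integer mod `n`, as a natural number -/
def rr (z : ℤ) : ℕ := (z % (n : ℤ)).toNat

lemma rr_cast (z : ℤ) : ((rr n z : ℕ) : ℤ) = z % (n : ℤ) :=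
  Int.toNat_of_nonneg (Int.emod_nonneg z (by exact_mod_cast NeZero.ne n))

lemma rr_zero : rr n 0 = 0 := by simp [rr]

lemma rr_add (x y : ℤ) : (rr n x + rr n y) % n = rr n (x + y) % n := by
  have h : (((rr n x + rr n y) % n : ℕ) : ℤ) = ((rr n (x + y) % n : ℕ) : ℤ) := by
    push_cast
    rw [rr_cast, rr_cast, rr_cast]
    rw [Int.add_emod  (x % (n:ℤ)) (y % (n:ℤ)) (n:ℤ)]
    rw [Int.emod_emod_of_dvd x dvd_rfl, Int.emod_emod_of_dvd y dvd_rfl]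
    rw [← Int.add_emod, Int.emod_emod_of_dvd _ dvd_rfl]
  exact_mod_cast h

lemma rr_modeq_add (x y : ℤ) : Nat.ModEq n (rr n x + rr n y) (rr n (x + y)) := rr_add n x y

lemma rr_fin (a : Fin n) : rr n ((a : ℕ) : ℤ) = (a : ℕ) := by
  have : ((a : ℕ) : ℤ) % (n : ℤ) = ((a : ℕ) : ℤ) := by
    apply Int.emod_eq_of_lt (by positivity) (by exact_mod_cast a.isLt)
  simp [rr, this]

/-- the monomial matrices `P^a Q^b`, indexed by `γ ∈ ℤ × ℤ` (reduced mod `n`) -/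
noncomputable def Mmat (γ : ℤ × ℤ) : Matrix (Fin n) (Fin n) ℂ :=
  fun i j => if i = j + ((rr n γ.1 : ℕ) : Fin n) then om n ^ ((j : ℕ) * rr n γ.2) else 0

lemma Mmat_zero : Mmat n 0 = 1 := by
  funext i j
  simp [Mmat, Matrix.one_apply, rr_zero, eq_comm]

lemma Mmat_entry_one (γ : ℤ × ℤ) : Mmat n γ ((rr n γ.1 : ℕ) : Fin n) 0 = 1 := by
  simp [Mmat]

lemma Mmat_mul (γ δ : ℤ × ℤ) :
    Mmat n γ * Mmat n δ = (om n ^ (rr n δ.1 * rr n γ.2)) • Mmat n (γ + δ) := by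
  funext i j
  rw [Matrix.mul_apply, Matrix.smul_apply]
  rw [Finset.sum_eq_single (j + ((rr n δ.1 : ℕ) : Fin n))]
  · -- main term
    have hcond : (j + ((rr n δ.1 : ℕ) : Fin n)) + ((rr n γ.1 : ℕ) : Fin n)
        = j + ((rr n (γ.1 + δ.1) : ℕ) : Fin n) := by
      rw [add_assoc]
      congr 1
      rw [← Nat.cast_add]
      exact finCast_congr n (by rw [Nat.add_comm]; exact rr_add n γ.1 δ.1)
    show (if i = (j + ((rr n δ.1 : ℕ) : Fin n)) + ((rr n γ.1 : ℕ) : Fin n) then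
        om n ^ (((j + ((rr n δ.1 : ℕ) : Fin n) : Fin n) : ℕ) * rr n γ.2) else 0) *
        (if (j + ((rr n δ.1 : ℕ) : Fin n)) = j + ((rr n δ.1 : ℕ) : Fin n) then
          om n ^ ((j : ℕ) * rr n δ.2) else 0)
        = om n ^ (rr n δ.1 * rr n γ.2) • (Mmat n (γ + δ)) i j
    rw [if_pos rfl, hcond, Mmat]
    simp only [Prod.fst_add, Prod.snd_add]
    by_cases hij : i = j + ((rr n (γ.1 + δ.1) : ℕ) : Fin n)
    · rw [if_pos hij]
      show (_ : ℂ) * _ = (_ : ℂ) * (if i = j + (_ : Fin n) then (_ : ℂ) else _)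
      rw [if_pos hij]
      rw [← pow_add, ← pow_add]
      apply pow_congr_mod n (om_pow_n n)
      -- arithmetic of residues
      have hval : ((j + ((rr n δ.1 : ℕ) : Fin n) : Fin n) : ℕ) = ((j : ℕ) + rr n δ.1 % n) % n := by
        rw [Fin.val_add, Fin.val_natCast]
      rw [hval]
      -- goal : (((j + rr δ.1 % n) % n) * rr γ.2 + j * rr δ.2) % n
      --      = (rr δ.1 * rr γ.2 + j * rr (γ.2 + δ.2)) % n
      have h1 : Nat.ModEq n (((j : ℕ) + rr n δ.1 % n) % n) ((j : ℕ) + rr n δ.1) :=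
        (Nat.mod_modEq _ n).trans (Nat.ModEq.add_left _ (Nat.mod_modEq _ n))
      have h2 : Nat.ModEq n ((j:ℕ) * (rr n γ.2 + rr n δ.2)) ((j:ℕ) * rr n (γ.2 + δ.2)) :=
        (rr_modeq_add n γ.2 δ.2).mul_left _
      calc (((j : ℕ) + rr n δ.1 % n) % n) * rr n γ.2 + (j:ℕ) * rr n δ.2
          ≡ ((j : ℕ) + rr n δ.1) * rr n γ.2 + (j:ℕ) * rr n δ.2 [MOD n] :=
            Nat.ModEq.add_right _ (h1.mul_right _)
        _ = rr n δ.1 * rr n γ.2 + (j:ℕ) * (rr n γ.2 + rr n δ.2) := by ring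
        _ ≡ rr n δ.1 * rr n γ.2 + (j:ℕ) * rr n (γ.2 + δ.2) [MOD n] := h2.add_left _
    · rw [if_neg hij, if_neg hij, zero_mul, smul_zero]
  · intro k _ hk
    show (if i = k + _ then _ else 0) * (if k = j + _ then _ else 0) = 0
    rw [if_neg hk, mul_zero]
  · intro h
    exact absurd (Finset.mem_univ _) h

lemma Mmat_fin_entry (a b : Fin n) (i j : Fin n) :
    Mmat n (((a : ℕ) : ℤ), ((b : ℕ) : ℤ)) i j
      = if i = j + a then om n ^ ((j : ℕ) * (b : ℕ)) else 0 := by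
  simp only [Mmat, rr_fin, Fin.cast_val_eq_self]

/-- DFT orthogonality for the primitive root -/
lemma dft_sum (j j' : Fin n) :
    ∑ b : Fin n, om n ^ ((j : ℕ) * (b : ℕ)) * (om n ^ ((j' : ℕ) * (b : ℕ)))⁻¹
      = if j = j' then (n : ℂ) else 0 := by
  set z : ℂ := om n ^ (j : ℕ) * (om n ^ (j' : ℕ))⁻¹ with hz
  have hterm : ∀ b : Fin n,
      om n ^ ((j : ℕ) * (b : ℕ)) * (om n ^ ((j' : ℕ) * (b : ℕ)))⁻¹ = z ^ (b : ℕ) := by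
    intro b
    rw [hz, mul_pow, inv_pow, ← pow_mul, ← pow_mul]
  rw [Finset.sum_congr rfl (fun b _ => hterm b)]
  rw [Fin.sum_univ_eq_sum_range (fun b => z ^ b) n]
  by_cases hjj : j = j'
  · subst hjj
    have hz1 : z = 1 := by
      rw [hz, mul_inv_cancel₀ (pow_ne_zero _ (om_ne_zero n))]
    simp [hz1]
  · rw [if_neg hjj]
    have hz1 : z ≠ 1 := by
      rw [hz]
      intro hcon
      rw [mul_inv_eq_one₀ (pow_ne_zero _ (om_ne_zero n))] at hcon
      exact hjj (Fin.ext ((hom_root n).pow_inj j.isLt j'.isLt hcon))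
    have hzn : z ^ n = 1 := by
      rw [hz, mul_pow, inv_pow, ← pow_mul, ← pow_mul, mul_comm (j:ℕ) n, mul_comm (j':ℕ) n,
        pow_mul, pow_mul, om_pow_n, one_pow, one_pow, inv_one, mul_one]
    rw [geom_sum_eq hz1, hzn, sub_self, zero_div]

end Cyclic

section Stage0
variable {n g : ℕ}

lemma degOf_add (e1 e2 : Vars n g →₀ ℕ) : degOf (e1 + e2) = degOf e1 + degOf e2 :=
  Finsupp.sum_add_index' (fun _ => rfl) (fun _ _ _ => rfl)

lemma coeff_homComp (d : ℕ) (f : PS n g) (e : Vars n g →₀ ℕ) :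
    MvPowerSeries.coeff e (homComp d f) =
      if degOf e = d then MvPowerSeries.coeff e f else 0 := rfl

/-- all coefficients of entries below total degree D vanish -/
def lowZero (D : ℕ) (x : Matrix (Fin n) (Fin n) (PS n g)) : Prop :=
  ∀ i j e, degOf e < D → MvPowerSeries.coeff e (x i j) = 0

noncomputable def hcm (d : ℕ) (x : Matrix (Fin n) (Fin n) (PS n g)) :
    Matrix (Fin n) (Fin n) (PS n g) :=
  Matrix.of fun i j => homComp d (x i j)

lemma coeff_matrix_mul (x y : Matrix (Fin n) (Fin n) (PS n g)) (i j : Fin n)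
    (e : Vars n g →₀ ℕ) :
    MvPowerSeries.coeff e ((x * y) i j) =
      ∑ k : Fin n, ∑ p ∈ Finset.HasAntidiagonal.antidiagonal e,
        MvPowerSeries.coeff p.1 (x i k) * MvPowerSeries.coeff p.2 (y k j) := by
  rw [Matrix.mul_apply, map_sum]
  exact Finset.sum_congr rfl fun k _ => MvPowerSeries.coeff_mul _ _ _

lemma lowZero_mul {D1 D2 : ℕ} {x y : Matrix (Fin n) (Fin n) (PS n g)}
    (hx : lowZero D1 x) (hy : lowZero D2 y) : lowZero (D1 + D2) (x * y) := by
  intro i j e he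
  rw [coeff_matrix_mul]
  refine Finset.sum_eq_zero fun k _ => Finset.sum_eq_zero fun p hp => ?_
  rw [Finset.HasAntidiagonal.mem_antidiagonal] at hp
  have hd : degOf p.1 + degOf p.2 < D1 + D2 := by
    rw [← degOf_add, hp]; exact he
  rcases lt_or_ge (degOf p.1) D1 with h | h
  · rw [hx i k p.1 h, zero_mul]
  · rw [hy k j p.2 (by omega), mul_zero]

lemma hcm_mul {D1 D2 : ℕ} {x y : Matrix (Fin n) (Fin n) (PS n g)}
    (hx : lowZero D1 x) (hy : lowZero D2 y) :
    hcm (D1 + D2) (x * y) = hcm D1 x * hcm D2 y := by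
  ext i j e
  have hR : MvPowerSeries.coeff e ((hcm D1 x * hcm D2 y) i j) =
      ∑ k : Fin n, ∑ p ∈ Finset.HasAntidiagonal.antidiagonal e,
        (if degOf p.1 = D1 then MvPowerSeries.coeff p.1 (x i k) else 0) *
        (if degOf p.2 = D2 then MvPowerSeries.coeff p.2 (y k j) else 0) := by
    rw [coeff_matrix_mul]
    exact Finset.sum_congr rfl fun k _ => Finset.sum_congr rfl fun p _ => rfl
  have hL : MvPowerSeries.coeff e ((hcm (D1 + D2) (x * y)) i j) =
      if degOf e = D1 + D2 then MvPowerSeries.coeff e ((x * y) i j) else 0 := rfl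
  rw [hL, hR]
  by_cases hdeg : degOf e = D1 + D2
  · rw [if_pos hdeg, coeff_matrix_mul]
    refine Finset.sum_congr rfl fun k _ => Finset.sum_congr rfl fun p hp => ?_
    rw [Finset.HasAntidiagonal.mem_antidiagonal] at hp
    have hsum : degOf p.1 + degOf p.2 = D1 + D2 := by rw [← degOf_add, hp, hdeg]
    by_cases h1 : degOf p.1 = D1
    · have h2 : degOf p.2 = D2 := by omega
      rw [if_pos h1, if_pos h2]
    · rcases lt_or_ge (degOf p.1) D1 with h | h
      · rw [hx i k p.1 h, zero_mul, if_neg h1, zero_mul]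
      · have h2 : ¬ degOf p.2 = D2 := by omega
        rw [hy k j p.2 (by omega), mul_zero, if_neg h2, mul_zero]
  · rw [if_neg hdeg]
    symm
    refine Finset.sum_eq_zero fun k _ => Finset.sum_eq_zero fun p hp => ?_
    rw [Finset.HasAntidiagonal.mem_antidiagonal] at hp
    by_cases h1 : degOf p.1 = D1
    · by_cases h2 : degOf p.2 = D2
      · exfalso; apply hdeg; rw [← hp, degOf_add, h1, h2]
      · rw [if_neg h2, mul_zero]
    · rw [if_neg h1, zero_mul]

lemma hcm_pow {D : ℕ} {x : Matrix (Fin n) (Fin n) (PS n g)} (hx : lowZero D x) :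
    ∀ r : ℕ, 1 ≤ r → lowZero (r * D) (x ^ r) ∧ hcm (r * D) (x ^ r) = (hcm D x) ^ r := by
  intro r
  induction r with
  | zero => omega
  | succ r ih =>
    intro _
    rcases Nat.eq_zero_or_pos r with h | h
    · subst h
      constructor
      · simpa using hx
      · simp
    · have hr : 1 ≤ r := h
      obtain ⟨ih1, ih2⟩ := ih hr
      have hmul : (r + 1) * D = r * D + D := by ring
      constructor
      · rw [pow_succ, hmul]; exact lowZero_mul ih1 hx
      · rw [pow_succ, hmul, hcm_mul ih1 hx, ih2, ← pow_succ]

end Stage0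

section GenSym

variable (n g : ℕ) [NeZero n]

/-- the big coefficient ring: group algebra of `ℤ²` over `ℂ[τ]` -/
abbrev BB := AddMonoidAlgebra (Poly n g) (ℤ × ℤ)

noncomputable def MB (γ : ℤ × ℤ) : Matrix (Fin n) (Fin n) (Poly n g) :=
  (Mmat n γ).map (algebraMap ℂ (Poly n g))

lemma MB_zero : MB n g 0 = 1 := by
  funext i j
  rw [MB, Mmat_zero]
  by_cases h : i = j <;> simp [Matrix.map_apply, Matrix.one_apply, h]

lemma MB_mul (γ δ : ℤ × ℤ) :
    MB n g γ * MB n g δ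
      = (algebraMap ℂ (Poly n g) (om n ^ (rr n δ.1 * rr n γ.2))) • MB n g (γ + δ) := by
  funext i j
  rw [MB, MB, MB, ← Matrix.map_mul, Mmat_mul]
  rw [Matrix.map_apply, Matrix.smul_apply, Matrix.smul_apply, Matrix.map_apply]
  rw [smul_eq_mul, map_mul, smul_eq_mul]

lemma MB_entry_one (γ : ℤ × ℤ) : MB n g γ ((rr n γ.1 : ℕ) : Fin n) 0 = 1 := by
  rw [MB, Matrix.map_apply, Mmat_entry_one, map_one]

/-- the matrix of `γ`-coefficients of a matrix over `BB` -/
noncomputable def cm (γ : ℤ × ℤ) (x : Matrix (Fin n) (Fin n) (BB n g)) :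
    Matrix (Fin n) (Fin n) (Poly n g) :=
  Matrix.of fun i j => (x i j).coeff γ

lemma cm_apply (γ : ℤ × ℤ) (x : Matrix (Fin n) (Fin n) (BB n g)) (i j : Fin n) :
    cm n g γ x i j = (x i j).coeff γ := rfl

/-- the subset of `M_n(BB)` whose `γ`-coefficient matrices are scalar multiples of the
monomial matrices: a generic-coefficient version of the symbol algebra. -/
def Dset : Set (Matrix (Fin n) (Fin n) (BB n g)) :=
  {x | ∀ γ : ℤ × ℤ, ∃ c : Poly n g, cm n g γ x = c • MB n g γ}

noncomputable def suppM (x : Matrix (Fin n) (Fin n) (BB n g)) : Finset (ℤ × ℤ) :=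
  Finset.univ.biUnion fun ij : Fin n × Fin n => (x ij.1 ij.2).coeff.support

lemma supp_subset (x : Matrix (Fin n) (Fin n) (BB n g)) (i j : Fin n) :
    (x i j).coeff.support ⊆ suppM n g x :=
  Finset.subset_biUnion_of_mem (fun ij : Fin n × Fin n => (x ij.1 ij.2).coeff.support)
    (Finset.mem_univ (i, j))

lemma cm_eq_zero_of_not_mem {x : Matrix (Fin n) (Fin n) (BB n g)} {γ : ℤ × ℤ}
    (h : γ ∉ suppM n g x) : cm n g γ x = 0 := by
  funext i j
  have : γ ∉ (x i j).coeff.support := fun hc => h (supp_subset n g x i j hc)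
  exact Finsupp.notMem_support_iff.mp this

lemma suppM_nonempty {x : Matrix (Fin n) (Fin n) (BB n g)} (hx : x ≠ 0) :
    (suppM n g x).Nonempty := by
  by_contra h
  apply hx
  funext i j
  rw [Finset.not_nonempty_iff_eq_empty] at h
  apply AddMonoidAlgebra.coeff_eq_zero.mp
  apply Finsupp.support_eq_empty.mp
  apply Finset.subset_empty.mp
  rw [← h]; exact supp_subset n g x i j

lemma cm_ne_zero_of_mem {x : Matrix (Fin n) (Fin n) (BB n g)} {γ : ℤ × ℤ}
    (h : γ ∈ suppM n g x) : cm n g γ x ≠ 0 := by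
  rw [suppM, Finset.mem_biUnion] at h
  obtain ⟨ij, -, hmem⟩ := h
  intro hc
  have := congrFun (congrFun hc ij.1) ij.2
  rw [cm_apply] at this
  exact Finsupp.mem_support_iff.mp hmem this

/-- coefficient of a product in the group algebra, as a convolution over any superset
of the support of the first factor -/
lemma amul_apply {R : Type*} [CommRing R] (f g' : AddMonoidAlgebra R (ℤ × ℤ))
    (S : Finset (ℤ × ℤ)) (hS : f.coeff.support ⊆ S) (γ : ℤ × ℤ) :
    (f * g').coeff γ = ∑ δ ∈ S, f.coeff δ * g'.coeff (γ - δ) := by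
  rw [AddMonoidAlgebra.mul_apply, Finsupp.sum]
  rw [Finset.sum_subset hS (by
    intro δ _ hδ
    have hfδ : f.coeff δ = 0 := Finsupp.notMem_support_iff.mp hδ
    rw [Finsupp.sum]
    apply Finset.sum_eq_zero
    intro a _
    simp [hfδ])]
  apply Finset.sum_congr rfl
  intro δ _
  rw [Finsupp.sum]
  have hcong : ∀ a₂ ∈ g'.coeff.support,
      (if δ + a₂ = γ then f.coeff δ * g'.coeff a₂ else 0) = if a₂ = γ - δ then f.coeff δ * g'.coeff a₂ else 0 :=
    fun a₂ _ => if_congr eq_sub_iff_add_eq'.symm rfl rfl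
  rw [Finset.sum_congr rfl hcong, Finset.sum_ite_eq' g'.coeff.support (γ - δ) (fun a₂ => f.coeff δ * g'.coeff a₂)]
  by_cases hmem : γ - δ ∈ g'.coeff.support
  · rw [if_pos hmem]
  · rw [if_neg hmem, Finsupp.notMem_support_iff.mp hmem, mul_zero]

lemma cm_mul (x y : Matrix (Fin n) (Fin n) (BB n g)) (γ : ℤ × ℤ) :
    cm n g γ (x * y) = ∑ δ ∈ suppM n g x, cm n g δ x * cm n g (γ - δ) y := by
  funext i j
  rw [cm_apply, Matrix.mul_apply, AddMonoidAlgebra.coeff_sum, Finsupp.finset_sum_apply]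
  have h1 : ∀ k : Fin n, (x i k * y k j).coeff γ = ∑ δ ∈ suppM n g x, (x i k).coeff δ * (y k j).coeff (γ - δ) :=
    fun k => amul_apply _ _ _ (supp_subset n g x i k) γ
  rw [Finset.sum_congr rfl fun k _ => h1 k, Finset.sum_comm]
  rw [Matrix.sum_apply]
  apply Finset.sum_congr rfl
  intro δ _
  rw [Matrix.mul_apply]
  rfl

lemma Dset_mul {x y : Matrix (Fin n) (Fin n) (BB n g)}
    (hx : x ∈ Dset n g) (hy : y ∈ Dset n g) : x * y ∈ Dset n g := by
  intro γ
  choose cx hcx using hx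
  choose cy hcy using hy
  refine ⟨∑ δ ∈ suppM n g x,
    cx δ * cy (γ - δ) * algebraMap ℂ (Poly n g) (om n ^ (rr n (γ - δ).1 * rr n δ.2)), ?_⟩
  rw [cm_mul]
  rw [Finset.sum_congr rfl (fun δ _ => by rw [hcx δ, hcy (γ - δ)])]
  have hterm : ∀ δ : ℤ × ℤ,
      (cx δ • MB n g δ) * (cy (γ - δ) • MB n g (γ - δ))
        = (cx δ * cy (γ - δ) * algebraMap ℂ (Poly n g) (om n ^ (rr n (γ - δ).1 * rr n δ.2)))
            • MB n g γ := by
    intro δ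
    have h3 : δ + (γ - δ) = γ := by abel
    rw [Matrix.smul_mul, Matrix.mul_smul, MB_mul, h3, smul_smul, smul_smul]
  rw [Finset.sum_congr rfl (fun δ _ => hterm δ), ← Finset.sum_smul]

lemma Dset_add {x y : Matrix (Fin n) (Fin n) (BB n g)}
    (hx : x ∈ Dset n g) (hy : y ∈ Dset n g) : x + y ∈ Dset n g := by
  intro γ
  obtain ⟨c1, h1⟩ := hx γ
  obtain ⟨c2, h2⟩ := hy γ
  refine ⟨c1 + c2, ?_⟩
  have : cm n g γ (x + y) = cm n g γ x + cm n g γ y := by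
    funext i j; rw [cm_apply]; show (x i j + y i j).coeff γ = _; rw [AddMonoidAlgebra.coeff_add, Finsupp.add_apply]; rfl
  rw [this, h1, h2, add_smul]

lemma Dset_algebraMap (z : ℂ) :
    algebraMap ℂ (Matrix (Fin n) (Fin n) (BB n g)) z ∈ Dset n g := by
  intro γ
  refine ⟨if γ = 0 then algebraMap ℂ (Poly n g) z else 0, ?_⟩
  funext i j
  rw [cm_apply, Matrix.algebraMap_matrix_apply]
  by_cases hγ : γ = 0
  · subst hγ
    rw [if_pos rfl, Matrix.smul_apply, MB_zero]
    by_cases hij : i = j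
    · subst hij
      rw [if_pos rfl]
      have : (algebraMap ℂ (BB n g) z) = AddMonoidAlgebra.single 0 (algebraMap ℂ (Poly n g) z) := by
        have := AddMonoidAlgebra.coe_algebraMap (A := Poly n g) (M := ℤ × ℤ) (R := ℂ)
        exact congrFun this z
      rw [this]
      rw [AddMonoidAlgebra.coeff_single, Finsupp.single_apply, if_pos rfl, Matrix.one_apply_eq, smul_eq_mul, mul_one]
    · rw [if_neg hij]
      show (0 : BB n g).coeff 0 = _
      rw [Matrix.one_apply_ne hij, smul_zero]
      rfl
  · rw [if_neg hγ, zero_smul]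
    by_cases hij : i = j
    · subst hij
      rw [if_pos rfl]
      have : (algebraMap ℂ (BB n g) z) = AddMonoidAlgebra.single 0 (algebraMap ℂ (Poly n g) z) := by
        have := AddMonoidAlgebra.coe_algebraMap (A := Poly n g) (M := ℤ × ℤ) (R := ℂ)
        exact congrFun this z
      rw [this, AddMonoidAlgebra.coeff_single, Finsupp.single_apply, if_neg (by exact fun h => hγ h.symm)]
      rfl
    · rw [if_neg hij]
      rfl

/-- lex comparison helper -/
lemma lex_lt_shift {a b d : ℤ × ℤ} (h : toLex d < toLex a) :
    toLex b < toLex (a + b - d) := by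
  rcases (Prod.Lex.toLex_lt_toLex).mp h with h1 | ⟨h1, h2⟩
  · exact (Prod.Lex.toLex_lt_toLex : toLex b < toLex (a + b - d) ↔ _).mpr (Or.inl (by
      show b.1 < a.1 + b.1 - d.1
      omega))
  · exact (Prod.Lex.toLex_lt_toLex : toLex b < toLex (a + b - d) ↔ _).mpr (Or.inr ⟨by
      show b.1 = a.1 + b.1 - d.1
      omega, by
      show b.2 < a.2 + b.2 - d.2
      omega⟩)

noncomputable def topIdx (x : Matrix (Fin n) (Fin n) (BB n g)) (hx : x ≠ 0) : ℤ × ℤ :=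
  ofLex (((suppM n g x).image toLex).max' (by
    obtain ⟨γ, hγ⟩ := suppM_nonempty n g hx
    exact ⟨toLex γ, Finset.mem_image_of_mem _ hγ⟩))

lemma topIdx_mem (x : Matrix (Fin n) (Fin n) (BB n g)) (hx : x ≠ 0) :
    topIdx n g x hx ∈ suppM n g x := by
  have := Finset.max'_mem ((suppM n g x).image toLex) (by
    obtain ⟨γ, hγ⟩ := suppM_nonempty n g hx
    exact ⟨toLex γ, Finset.mem_image_of_mem _ hγ⟩)
  rw [Finset.mem_image] at this
  obtain ⟨γ, hγ, heq⟩ := this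
  have : γ = topIdx n g x hx := by
    rw [topIdx, ← heq]; rfl
  rwa [← this]

lemma topIdx_le (x : Matrix (Fin n) (Fin n) (BB n g)) (hx : x ≠ 0) {δ : ℤ × ℤ}
    (hδ : δ ∈ suppM n g x) : toLex δ ≤ toLex (topIdx n g x hx) := by
  have := Finset.le_max' ((suppM n g x).image toLex) (toLex δ) (Finset.mem_image_of_mem _ hδ)
  exact this

/-- the key domain property -/
lemma Dset_domain {x y : Matrix (Fin n) (Fin n) (BB n g)}
    (hx : x ∈ Dset n g) (hy : y ∈ Dset n g) (hx0 : x ≠ 0) (hy0 : y ≠ 0) :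
    x * y ≠ 0 := by
  set γx := topIdx n g x hx0 with hγx
  set γy := topIdx n g y hy0 with hγy
  obtain ⟨cx, hcx⟩ := hx γx
  obtain ⟨cy, hcy⟩ := hy γy
  have hcx0 : cx ≠ 0 := by
    intro h
    apply cm_ne_zero_of_mem n g (topIdx_mem n g x hx0)
    rw [hcx, h, zero_smul]
  have hcy0 : cy ≠ 0 := by
    intro h
    apply cm_ne_zero_of_mem n g (topIdx_mem n g y hy0)
    rw [hcy, h, zero_smul]
  -- compute top coefficient of the product
  have hkey : cm n g (γx + γy) (x * y)
      = (cx * cy * algebraMap ℂ (Poly n g) (om n ^ (rr n γy.1 * rr n γx.2)))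
          • MB n g (γx + γy) := by
    rw [cm_mul]
    rw [Finset.sum_eq_single γx]
    · rw [hcx]
      rw [add_sub_cancel_left, hcy]
      rw [Matrix.smul_mul, Matrix.mul_smul, MB_mul, smul_smul, smul_smul]
    · intro δ hδS hδne
      have hlt : toLex δ < toLex γx :=
        lt_of_le_of_ne (topIdx_le n g x hx0 hδS) (by
          intro h; exact hδne (toLex.injective h))
      have : γx + γy - δ ∉ suppM n g y := by
        intro hmem
        have h1 := topIdx_le n g y hy0 hmem
        have h2 := lex_lt_shift (a := γx) (b := γy) hlt
        exact absurd h1 (not_le_of_gt h2)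
      rw [cm_eq_zero_of_not_mem n g this, mul_zero]
    · intro h
      exact absurd (topIdx_mem n g x hx0) h
  intro hcon
  have h0 : cm n g (γx + γy) (x * y) = 0 := by
    rw [hcon]
    funext i j
    rfl
  rw [hkey] at h0
  have hu : algebraMap ℂ (Poly n g) (om n ^ (rr n γy.1 * rr n γx.2)) ≠ 0 := by
    apply (map_ne_zero_iff _ (MvPolynomial.C_injective _ ℂ)).mpr
    exact pow_ne_zero _ (om_ne_zero n)
  have h2 : cx * cy * algebraMap ℂ (Poly n g) (om n ^ (rr n γy.1 * rr n γx.2)) = 0 := by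
    have := congrFun (congrFun h0 ((rr n (γx + γy).1 : ℕ) : Fin n)) 0
    rwa [Matrix.smul_apply, MB_entry_one, smul_eq_mul, mul_one, Matrix.zero_apply] at this
  exact (mul_ne_zero (mul_ne_zero hcx0 hcy0) hu) h2

end GenSym


section Stage3

variable (n g : ℕ) [NeZero n]

lemma castpair_inj {ab ab' : Fin n × Fin n}
    (h : ((((ab.1 : ℕ) : ℤ), ((ab.2 : ℕ) : ℤ)) : ℤ × ℤ)
       = ((((ab'.1 : ℕ) : ℤ), ((ab'.2 : ℕ) : ℤ)) : ℤ × ℤ)) : ab = ab' := by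
  rw [Prod.mk.injEq] at h
  obtain ⟨h1, h2⟩ := h
  apply Prod.ext
  · exact Fin.val_injective (by exact_mod_cast h1)
  · exact Fin.val_injective (by exact_mod_cast h2)

/-- generic elements of the symbol algebra -/
noncomputable def dmat (k : Fin g) : Matrix (Fin n) (Fin n) (BB n g) :=
  Matrix.of fun i j => ∑ ab : Fin n × Fin n,
    AddMonoidAlgebra.single (((ab.1 : ℕ) : ℤ), ((ab.2 : ℕ) : ℤ))
      (MvPolynomial.X (k, ab.1, ab.2) *
        algebraMap ℂ (Poly n g) (Mmat n (((ab.1 : ℕ) : ℤ), ((ab.2 : ℕ) : ℤ)) i j))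

lemma dmat_mem (k : Fin g) : dmat n g k ∈ Dset n g := by
  intro γ
  by_cases hγ : ∃ ab : Fin n × Fin n, ((((ab.1 : ℕ) : ℤ), ((ab.2 : ℕ) : ℤ)) : ℤ × ℤ) = γ
  · obtain ⟨ab₀, hab₀⟩ := hγ
    refine ⟨MvPolynomial.X (k, ab₀.1, ab₀.2), ?_⟩
    funext i j
    rw [cm_apply, Matrix.smul_apply]
    show (∑ ab : Fin n × Fin n, AddMonoidAlgebra.single _ _).coeff γ = _
    rw [AddMonoidAlgebra.coeff_sum, Finsupp.finset_sum_apply]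
    rw [Finset.sum_eq_single ab₀]
    · rw [AddMonoidAlgebra.coeff_single, Finsupp.single_apply, if_pos hab₀, ← hab₀]
      rw [MB, Matrix.map_apply, smul_eq_mul]
    · intro ab _ hne
      rw [AddMonoidAlgebra.coeff_single, Finsupp.single_apply, if_neg]
      intro hc
      exact hne (castpair_inj n (hc.trans hab₀.symm))
    · intro hc
      exact absurd (Finset.mem_univ ab₀) hc
  · refine ⟨0, ?_⟩
    rw [zero_smul]
    funext i j
    rw [cm_apply]
    show (∑ ab : Fin n × Fin n, AddMonoidAlgebra.single _ _).coeff γ = _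
    rw [AddMonoidAlgebra.coeff_sum, Finsupp.finset_sum_apply]
    rw [Finset.sum_eq_zero]
    · rfl
    · intro ab _
      rw [AddMonoidAlgebra.coeff_single, Finsupp.single_apply, if_neg (fun hc => hγ ⟨ab, hc⟩)]

/-- substitution of the generic symbol-algebra elements for the generic matrices -/
noncomputable def sig0 : Poly n g →ₐ[ℂ] BB n g :=
  MvPolynomial.aeval (fun v : Vars n g => dmat n g v.1 v.2.1 v.2.2)

noncomputable def sigM : Matrix (Fin n) (Fin n) (Poly n g) →ₐ[ℂ] Matrix (Fin n) (Fin n) (BB n g) :=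
  AlgHom.mapMatrix (sig0 n g)

/-- the inverse-DFT coefficients used to recover the generic matrices -/
noncomputable def cval : Vars n g → BB n g := fun v =>
  ∑ j' : Fin n, AddMonoidAlgebra.single (-((v.2.1 : ℕ) : ℤ), -((v.2.2 : ℕ) : ℤ))
    (algebraMap ℂ (Poly n g) ((n : ℂ)⁻¹ * (om n ^ ((j' : ℕ) * (v.2.2 : ℕ)))⁻¹) *
      MvPolynomial.X (v.1, j' + v.2.1, j'))

noncomputable def evalt : Poly n g →+* BB n g :=
  MvPolynomial.eval₂Hom
    ((AddMonoidAlgebra.singleZeroRingHom : Poly n g →+* BB n g).comp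
      (MvPolynomial.C : ℂ →+* Poly n g)) (cval n g)

noncomputable def rho : BB n g →+* BB n g :=
  AddMonoidAlgebra.liftNCRingHom (evalt n g) (AddMonoidAlgebra.of (Poly n g) (ℤ × ℤ))
    (fun _ _ => Commute.all _ _)

lemma rho_single (γ : ℤ × ℤ) (c : Poly n g) :
    rho n g (AddMonoidAlgebra.single γ c) = evalt n g c * AddMonoidAlgebra.single γ 1 := by
  rw [rho, AddMonoidAlgebra.liftNCRingHom]
  show AddMonoidAlgebra.liftNC _ _ _ = _
  rw [AddMonoidAlgebra.liftNC_single]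
  rfl

/-- the DFT identity in the polynomial ring -/
lemma poly_dft (k : Fin g) (i j : Fin n) :
    ∑ ab : Fin n × Fin n, ∑ j' : Fin n,
      algebraMap ℂ (Poly n g) ((n : ℂ)⁻¹ * (om n ^ ((j' : ℕ) * ((ab.2 : ℕ)))) ⁻¹)
        * MvPolynomial.X (k, j' + ab.1, j')
        * algebraMap ℂ (Poly n g) (Mmat n (((ab.1 : ℕ) : ℤ), ((ab.2 : ℕ) : ℤ)) i j)
      = MvPolynomial.X (k, i, j) := by
  rw [Fintype.sum_prod_type]
  rw [Finset.sum_eq_single (i - j)]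
  · -- a = i - j
    have hcond : i = j + (i - j) := (add_sub_cancel j i).symm
    have hstep : ∀ b : Fin n, ∀ j' : Fin n,
        algebraMap ℂ (Poly n g) ((n : ℂ)⁻¹ * (om n ^ ((j' : ℕ) * (b : ℕ)))⁻¹)
          * MvPolynomial.X (k, j' + (i - j), j')
          * algebraMap ℂ (Poly n g) (Mmat n ((((i - j : Fin n) : ℕ) : ℤ), ((b : ℕ) : ℤ)) i j)
        = algebraMap ℂ (Poly n g)
            ((n : ℂ)⁻¹ * ((om n ^ ((j' : ℕ) * (b : ℕ)))⁻¹ * om n ^ ((j : ℕ) * (b : ℕ))))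
            * MvPolynomial.X (k, j' + (i - j), j') := by
      intro b j'
      rw [Mmat_fin_entry, if_pos hcond]
      rw [mul_right_comm, ← map_mul, mul_assoc]
    rw [Finset.sum_congr rfl fun b _ => Finset.sum_congr rfl fun j' _ => hstep b j']
    rw [Finset.sum_comm]
    have hinner : ∀ j' : Fin n,
        ∑ b : Fin n, algebraMap ℂ (Poly n g)
            ((n : ℂ)⁻¹ * ((om n ^ ((j' : ℕ) * (b : ℕ)))⁻¹ * om n ^ ((j : ℕ) * (b : ℕ))))
            * MvPolynomial.X (k, j' + (i - j), j')
        = (if j = j' then (1 : Poly n g) else 0) * MvPolynomial.X (k, j' + (i - j), j') := by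
      intro j'
      rw [← Finset.sum_mul, ← map_sum]
      congr 1
      have : ∀ b : Fin n, (n : ℂ)⁻¹ * ((om n ^ ((j' : ℕ) * (b : ℕ)))⁻¹ * om n ^ ((j : ℕ) * (b : ℕ)))
          = (n : ℂ)⁻¹ * (om n ^ ((j : ℕ) * (b : ℕ)) * (om n ^ ((j' : ℕ) * (b : ℕ)))⁻¹) := by
        intro b; ring
      rw [Finset.sum_congr rfl fun b _ => this b, ← Finset.mul_sum, dft_sum]
      by_cases hjj : j = j'
      · rw [if_pos hjj, if_pos hjj, inv_mul_cancel₀ (by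
          exact_mod_cast Nat.cast_ne_zero.mpr (NeZero.ne n)), map_one]
      · rw [if_neg hjj, if_neg hjj, mul_zero, map_zero]
    rw [Finset.sum_congr rfl fun j' _ => hinner j']
    rw [Finset.sum_eq_single j]
    · rw [if_pos rfl, one_mul, ← hcond]
    · intro j' _ hne
      rw [if_neg (fun hc => hne hc.symm), zero_mul]
    · intro hc
      exact absurd (Finset.mem_univ j) hc
  · -- a ≠ i - j
    intro a _ hne
    apply Finset.sum_eq_zero
    intro b _
    apply Finset.sum_eq_zero
    intro j' _
    have hcond : ¬ i = j + a := by
      intro hc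
      apply hne
      rw [hc, add_sub_cancel_left]
    rw [Mmat_fin_entry, if_neg hcond, map_zero, mul_zero]
  · intro hc
    exact absurd (Finset.mem_univ (i - j)) hc

lemma single_sum {ι : Type*} (s : Finset ι) (v : ι → Poly n g) :
    ∑ x ∈ s, AddMonoidAlgebra.single (0 : ℤ × ℤ) (v x)
      = AddMonoidAlgebra.single (0 : ℤ × ℤ) (∑ x ∈ s, v x) :=
  (map_sum (AddMonoidAlgebra.singleAddHom (0 : ℤ × ℤ)) v s).symm

lemma rho_dmat (k : Fin g) (i j : Fin n) :
    rho n g (dmat n g k i j) = AddMonoidAlgebra.single 0 (MvPolynomial.X (k, i, j)) := by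
  show rho n g (∑ ab : Fin n × Fin n, AddMonoidAlgebra.single _ _) = _
  rw [map_sum]
  have hterm : ∀ ab : Fin n × Fin n,
      rho n g (AddMonoidAlgebra.single (((ab.1 : ℕ) : ℤ), ((ab.2 : ℕ) : ℤ))
        (MvPolynomial.X (k, ab.1, ab.2) *
          algebraMap ℂ (Poly n g) (Mmat n (((ab.1 : ℕ) : ℤ), ((ab.2 : ℕ) : ℤ)) i j)))
      = AddMonoidAlgebra.single 0
          (∑ j' : Fin n,
            algebraMap ℂ (Poly n g) ((n : ℂ)⁻¹ * (om n ^ ((j' : ℕ) * ((ab.2 : ℕ))))⁻¹)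
              * MvPolynomial.X (k, j' + ab.1, j')
              * algebraMap ℂ (Poly n g) (Mmat n (((ab.1 : ℕ) : ℤ), ((ab.2 : ℕ) : ℤ)) i j)) := by
    intro ab
    rw [rho_single, map_mul]
    have hX : evalt n g (MvPolynomial.X (k, ab.1, ab.2)) = cval n g (k, ab.1, ab.2) := by
      rw [evalt]
      exact MvPolynomial.eval₂Hom_X' _ _ _
    have hC : evalt n g (algebraMap ℂ (Poly n g) (Mmat n (((ab.1 : ℕ) : ℤ), ((ab.2 : ℕ) : ℤ)) i j))
        = AddMonoidAlgebra.single 0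
            (MvPolynomial.C (Mmat n (((ab.1 : ℕ) : ℤ), ((ab.2 : ℕ) : ℤ)) i j)) := by
      rw [MvPolynomial.algebraMap_eq, evalt]
      rw [MvPolynomial.eval₂Hom_C]
      rfl
    rw [hX, hC, cval]
    rw [Finset.sum_mul, Finset.sum_mul]
    have hterm2 : ∀ j' : Fin n,
        AddMonoidAlgebra.single (-((ab.1 : ℕ) : ℤ), -((ab.2 : ℕ) : ℤ))
            (algebraMap ℂ (Poly n g) ((n : ℂ)⁻¹ * (om n ^ ((j' : ℕ) * ((ab.2 : ℕ))))⁻¹)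
              * MvPolynomial.X (k, j' + ab.1, j'))
          * AddMonoidAlgebra.single 0
              (MvPolynomial.C (Mmat n (((ab.1 : ℕ) : ℤ), ((ab.2 : ℕ) : ℤ)) i j))
          * AddMonoidAlgebra.single ((((ab.1 : ℕ) : ℤ), ((ab.2 : ℕ) : ℤ)) : ℤ × ℤ) 1
        = AddMonoidAlgebra.single (0 : ℤ × ℤ)
            (algebraMap ℂ (Poly n g) ((n : ℂ)⁻¹ * (om n ^ ((j' : ℕ) * ((ab.2 : ℕ))))⁻¹)
              * MvPolynomial.X (k, j' + ab.1, j')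
              * algebraMap ℂ (Poly n g) (Mmat n (((ab.1 : ℕ) : ℤ), ((ab.2 : ℕ) : ℤ)) i j)) := by
      intro j'
      have hz : ((-((ab.1 : ℕ) : ℤ), -((ab.2 : ℕ) : ℤ)) : ℤ × ℤ)
          + ((((ab.1 : ℕ) : ℤ), ((ab.2 : ℕ) : ℤ)) : ℤ × ℤ) = 0 := by
        simp [Prod.ext_iff]
      rw [AddMonoidAlgebra.single_mul_single, AddMonoidAlgebra.single_mul_single]
      rw [add_zero, mul_one, hz, MvPolynomial.algebraMap_eq]
    rw [Finset.sum_congr rfl fun j' _ => hterm2 j', single_sum n g]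
  rw [Finset.sum_congr rfl fun ab _ => hterm ab, single_sum n g, poly_dft]

/-- the retraction recovers the polynomial ring: `ρ ∘ σ₀ = single 0` -/
lemma rho_comp_sig0 :
    (rho n g).comp (sig0 n g : Poly n g →+* BB n g)
      = (AddMonoidAlgebra.singleZeroRingHom : Poly n g →+* BB n g) := by
  apply MvPolynomial.ringHom_ext
  · intro z
    rw [RingHom.comp_apply]
    have h1 : (sig0 n g : Poly n g →+* BB n g) (MvPolynomial.C z)
        = AddMonoidAlgebra.single 0 (MvPolynomial.C z) := by
      show sig0 n g (MvPolynomial.C z) = _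
      rw [sig0, MvPolynomial.aeval_C]
      have := AddMonoidAlgebra.coe_algebraMap (A := Poly n g) (M := ℤ × ℤ) (R := ℂ)
      have h2 := congrFun this z
      simp only [Function.comp_apply] at h2
      rw [h2, MvPolynomial.algebraMap_eq]
    rw [h1, rho_single]
    rw [evalt, MvPolynomial.eval₂Hom_C]
    show AddMonoidAlgebra.single 0 (MvPolynomial.C z) * AddMonoidAlgebra.single 0 1 = _
    rw [AddMonoidAlgebra.single_mul_single, add_zero, mul_one]
    rfl
  · intro v
    rw [RingHom.comp_apply]
    have h1 : (sig0 n g : Poly n g →+* BB n g) (MvPolynomial.X v)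
        = dmat n g v.1 v.2.1 v.2.2 := by
      show sig0 n g (MvPolynomial.X v) = _
      rw [sig0, MvPolynomial.aeval_X]
    rw [h1, rho_dmat]
    rfl

lemma sig_mem {p : Matrix (Fin n) (Fin n) (Poly n g)} (hp : p ∈ GM n g) :
    sigM n g p ∈ Dset n g := by
  induction hp using Algebra.adjoin_induction with
  | mem x hx =>
    obtain ⟨k, rfl⟩ := hx
    have : sigM n g (Xi n g k) = dmat n g k := by
      funext i j
      rw [sigM, AlgHom.mapMatrix_apply, Matrix.map_apply]
      show sig0 n g (MvPolynomial.X (k, i, j)) = _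
      rw [sig0, MvPolynomial.aeval_X]
    rw [this]
    exact dmat_mem n g k
  | algebraMap r =>
    rw [AlgHom.commutes]
    exact Dset_algebraMap n g r
  | add x y hx hy ihx ihy =>
    rw [map_add]
    exact Dset_add n g ihx ihy
  | mul x y hx hy ihx ihy =>
    rw [map_mul]
    exact Dset_mul n g ihx ihy

lemma Dset_pow {x : Matrix (Fin n) (Fin n) (BB n g)} (hx : x ∈ Dset n g) :
    ∀ m : ℕ, 1 ≤ m → x ^ m ∈ Dset n g := by
  intro m
  induction m with
  | zero => omega
  | succ m ih =>
    intro _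
    rcases Nat.eq_zero_or_pos m with h | h
    · subst h
      rw [pow_one]
      exact hx
    · rw [pow_succ]
      exact Dset_mul n g (ih h) hx

lemma Dset_reduced {x : Matrix (Fin n) (Fin n) (BB n g)} (hx : x ∈ Dset n g) :
    ∀ m : ℕ, 1 ≤ m → x ^ m = 0 → x = 0 := by
  intro m
  induction m with
  | zero => omega
  | succ m ih =>
    intro _ hpow
    rcases Nat.eq_zero_or_pos m with h | h
    · subst h
      rwa [pow_one] at hpow
    · by_contra hx0
      have hxm : x ^ m = 0 := by
        by_contra hxm0
        exact Dset_domain n g (Dset_pow n g hx m h) hx hxm0 hx0 (by rwa [← pow_succ])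
      exact hx0 (ih h hxm)

end Stage3


section Main

lemma coe_ringHom_eq {n g : ℕ} :
    ⇑(MvPolynomial.coeToMvPowerSeries.ringHom : Poly n g →+* PS n g)
    = fun q : Poly n g => (q : PS n g) := rfl

/-- **No nilpotents in the completed generic matrix algebra** (key step of
Proposition 3.1).  If `f ∈ ĜM` satisfies `f^m = 0` for some `m ≥ 1`, then `f = 0`. -/
theorem completed_generic_matrix_algebra_no_nilpotents
    {n g : ℕ} (hn : 1 ≤ n) (hg : 1 ≤ g)
    (f : Matrix (Fin n) (Fin n) (PS n g)) (hf : f ∈ GMhat n g)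
    (m : ℕ) (hm : 1 ≤ m) (hnil : f ^ m = 0) :
    f = 0 := by
  classical
  have hNZ : NeZero n := ⟨by omega⟩
  by_contra hf0
  -- there is a nonzero homogeneous component
  have hex : ∃ d : ℕ, hcm d f ≠ 0 := by
    have h1 : ∃ i j, f i j ≠ 0 := by
      by_contra hc
      push_neg at hc
      exact hf0 (by funext i j; exact hc i j)
    obtain ⟨i, j, hij⟩ := h1
    have h2 : ∃ e, MvPowerSeries.coeff e (f i j) ≠ 0 := by
      by_contra hc
      push_neg at hc
      exact hij (MvPowerSeries.ext fun e => hc e)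
    obtain ⟨e, he⟩ := h2
    refine ⟨degOf e, fun hc => he ?_⟩
    have h3 : MvPowerSeries.coeff e (hcm (degOf e) f i j) = 0 := by
      rw [hc]; rfl
    rwa [show hcm (degOf e) f i j = homComp (degOf e) (f i j) from rfl,
      coeff_homComp, if_pos rfl] at h3
  set d0 := Nat.find hex with hd0def
  have hne : hcm d0 f ≠ 0 := Nat.find_spec hex
  have hlow : lowZero d0 f := by
    intro i j e he
    have hzero : hcm (degOf e) f = 0 := by
      by_contra hc
      exact absurd hc (Nat.find_min hex he)
    have h3 : MvPowerSeries.coeff e (hcm (degOf e) f i j) = 0 := by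
      rw [hzero]; rfl
    rwa [show hcm (degOf e) f i j = homComp (degOf e) (f i j) from rfl,
      coeff_homComp, if_pos rfl] at h3
  obtain ⟨p, hpGM, hpeq⟩ := hf d0
  have hq : p.map (fun q : Poly n g => (q : PS n g)) = hcm d0 f := hpeq
  -- the homogeneous component is nilpotent
  have hq0 : (hcm d0 f) ^ m = 0 := by
    rw [← (hcm_pow hlow m hm).2, hnil]
    funext i j
    apply MvPowerSeries.ext
    intro e
    rw [show hcm (m * d0) (0 : Matrix (Fin n) (Fin n) (PS n g)) i j
        = homComp (m * d0) ((0 : Matrix (Fin n) (Fin n) (PS n g)) i j) from rfl,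
      coeff_homComp]
    simp
  -- hence `p ^ m = 0` in the polynomial matrix ring
  have hpm : p ^ m = 0 := by
    have hmap : ((p ^ m).map (fun q : Poly n g => (q : PS n g))) = 0 := by
      rw [← coe_ringHom_eq, ← RingHom.mapMatrix_apply, map_pow, RingHom.mapMatrix_apply,
        coe_ringHom_eq, hq, hq0]
    funext i j
    have h1 : (((p ^ m) i j : Poly n g) : PS n g) = 0 := by
      have := congrFun (congrFun hmap i) j
      rwa [Matrix.map_apply] at this
    have h2 : (((p ^ m) i j : Poly n g) : PS n g) = ((0 : Poly n g) : PS n g) := by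
      rw [h1]
      exact (MvPolynomial.coe_zero).symm
    exact MvPolynomial.coe_inj.mp h2
  -- push through the substitution into the symbol algebra and use the domain property
  have hsig : sigM n g p = 0 := by
    apply Dset_reduced n g (sig_mem n g hpGM) m hm
    rw [← map_pow, hpm, map_zero]
  -- recover `p = 0` via the retraction
  have hp0 : p = 0 := by
    funext i j
    have h1 : sig0 n g (p i j) = 0 := by
      have := congrFun (congrFun hsig i) j
      rwa [sigM, AlgHom.mapMatrix_apply, Matrix.map_apply] at this
    have h2 := DFunLike.congr_fun (rho_comp_sig0 n g) (p i j)
    rw [RingHom.comp_apply,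
      show ((sig0 n g : Poly n g →+* BB n g) (p i j)) = sig0 n g (p i j) from rfl,
      h1, map_zero] at h2
    have h3 : AddMonoidAlgebra.single (0 : ℤ × ℤ) (p i j) = 0 := h2.symm
    exact AddMonoidAlgebra.single_eq_zero.mp h3
  -- contradiction with the choice of `d0`
  apply hne
  rw [← hq, hp0]
  funext i j
  rw [Matrix.map_apply]
  exact MvPolynomial.coe_zero

end Main

end NCGeneric
end

section
/- Rank bound for evaluations of the skew-symmetric linear matrix on commuting tuples (claim proved in the Remark after Theorem 5.5): Let n ≥ 1 and let T_1, T_2, T_3 ∈ M_n(ℂ) be pairwise commuting matrices. Let A(T) ∈ M_{3n}(ℂ) be the 3×3 block matrix with block rows (0, T_3, −T_2), (−T_3, 0, T_1), (T_2, −T_1, 0). Then rank A(T) ≤ (54/19)·n, i.e., 19·rank A(T) ≤ 54·n. -/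
open Matrix

variable {n : ℕ}

private noncomputable def emb (n : ℕ) (i : Fin 3) : Matrix (Fin 3 × Fin n) (Fin n) ℂ :=
  Matrix.of fun p k => if p = (i, k) then 1 else 0

private noncomputable def prj (n : ℕ) (i : Fin 3) : Matrix (Fin n) (Fin 3 × Fin n) ℂ :=
  Matrix.of fun k p => if p = (i, k) then 1 else 0

private lemma emb_mul_apply (i : Fin 3) (B : Matrix (Fin n) (Fin 3 × Fin n) ℂ)
    (p q : Fin 3 × Fin n) : (emb n i * B) p q = if p.1 = i then B p.2 q else 0 := by
  obtain ⟨pi, pk⟩ := p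
  simp only [Matrix.mul_apply, emb, Matrix.of_apply, Prod.mk.injEq, ite_mul, one_mul, zero_mul,
    ite_and]
  by_cases h : pi = i <;> simp [h, Finset.sum_ite_eq]

private lemma mul_prj_apply (j : Fin 3) (B : Matrix (Fin n) (Fin n) ℂ)
    (k : Fin n) (q : Fin 3 × Fin n) :
    (B * prj n j) k q = if q.1 = j then B k q.2 else 0 := by
  obtain ⟨qi, qk⟩ := q
  simp only [Matrix.mul_apply, prj, Matrix.of_apply, Prod.mk.injEq, mul_ite, mul_one, mul_zero,
    ite_and]
  by_cases h : qi = j <;> simp [h, Finset.sum_ite_eq']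

private lemma block_apply (i j : Fin 3) (B : Matrix (Fin n) (Fin n) ℂ)
    (p q : Fin 3 × Fin n) :
    (emb n i * B * prj n j) p q = if p.1 = i ∧ q.1 = j then B p.2 q.2 else 0 := by
  rw [Matrix.mul_assoc, emb_mul_apply, mul_prj_apply]
  by_cases hp : p.1 = i <;> by_cases hq : q.1 = j <;> simp [hp, hq]

private lemma prj_mul_apply (j : Fin 3) (B : Matrix (Fin 3 × Fin n) (Fin n) ℂ) (k k' : Fin n) :
    (prj n j * B) k k' = B (j, k) k' := by
  simp only [Matrix.mul_apply, prj, Matrix.of_apply, Prod.mk.injEq, ite_mul, one_mul, zero_mul,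
    ite_and]
  rw [Fintype.sum_prod_type]
  simp [ite_and, Finset.sum_ite_eq, Finset.sum_ite_eq']

private lemma mat_rank_add_le {m k : Type*} [Fintype k] [Fintype m]
    (A B : Matrix m k ℂ) : (A + B).rank ≤ A.rank + B.rank := by
  rw [Matrix.rank, Matrix.rank, Matrix.rank, Matrix.mulVecLin_add]
  refine le_trans (Submodule.finrank_mono ?_)
    (Submodule.finrank_add_le_finrank_add_finrank _ _)
  rintro x ⟨v, rfl⟩
  exact Submodule.add_mem_sup ⟨v, rfl⟩ ⟨v, rfl⟩

private lemma rank_neg_le (X : Matrix (Fin n) (Fin n) ℂ) : (-X).rank ≤ X.rank := by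
  have h : -X = (-1 : Matrix (Fin n) (Fin n) ℂ) * X := by
    rw [Matrix.neg_mul, Matrix.one_mul]
  rw [h]
  exact Matrix.rank_mul_le_right _ _

private lemma rank_block_le (i j : Fin 3) (X : Matrix (Fin n) (Fin n) ℂ) :
    (emb n i * X * prj n j).rank ≤ X.rank :=
  le_trans (Matrix.rank_mul_le_left _ _) (Matrix.rank_mul_le_right _ _)

/-- **Rank bound for evaluations of the skew-symmetric linear matrix on commuting tuples**
(claim proved in the Remark after Theorem 5.5).  If `T₁, T₂, T₃ ∈ M_n(ℂ)` pairwise commute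
and `A(T)` is the `3n × 3n` block matrix with block rows `(0, T₃, −T₂)`, `(−T₃, 0, T₁)`,
`(T₂, −T₁, 0)`, then `rank A(T) ≤ (54/19)·n`. -/
theorem skew_matrix_rank_bound_on_commuting_tuples
    {n : ℕ} (T : Fin 3 → Matrix (Fin n) (Fin n) ℂ)
    (hcomm : ∀ i j, T i * T j = T j * T i) :
    19 * Matrix.rank (Matrix.of (fun (p q : Fin 3 × Fin n) =>
        (![![0, T 2, -T 1], ![-T 2, 0, T 0], ![T 1, -T 0, 0]] p.1 q.1) p.2 q.2))
      ≤ 54 * n := by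
  set A : Matrix (Fin 3 × Fin n) (Fin 3 × Fin n) ℂ :=
    Matrix.of (fun (p q : Fin 3 × Fin n) =>
      (![![0, T 2, -T 1], ![-T 2, 0, T 0], ![T 1, -T 0, 0]] p.1 q.1) p.2 q.2) with hA
  set a := emb n 0 * T 2 * prj n 1 with ha
  set b := emb n 0 * (-T 1) * prj n 2 with hb
  set c := emb n 1 * (-T 2) * prj n 0 with hc
  set d := emb n 1 * T 0 * prj n 2 with hd
  set e := emb n 2 * T 1 * prj n 0 with he
  set f := emb n 2 * (-T 0) * prj n 1 with hf
  have hS : A = a + b + c + d + e + f := by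
    ext ⟨pi, pk⟩ ⟨qi, qk⟩
    simp only [hA, Matrix.of_apply, Matrix.add_apply, ha, hb, hc, hd, he, hf, block_apply]
    fin_cases pi <;> fin_cases qi <;> simp
  -- the stacked matrix
  set B : Matrix (Fin 3 × Fin n) (Fin n) ℂ :=
    Matrix.of (fun (p : Fin 3 × Fin n) (k : Fin n) => T p.1 p.2 k) with hB
  have hprj : ∀ j : Fin 3, prj n j * B = T j := by
    intro j; ext k k'; rw [prj_mul_apply]; rfl
  have hAB : A * B = 0 := by
    rw [hS, ha, hb, hc, hd, he, hf]
    simp only [Matrix.add_mul, Matrix.mul_assoc, hprj]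
    simp only [Matrix.neg_mul]
    rw [hcomm 2 1, hcomm 2 0, hcomm 1 0]
    simp only [Matrix.mul_neg]
    abel
  -- rank-nullity bound
  have h2 : A.rank + B.rank ≤ 3 * n := by
    have := Matrix.rank_add_rank_le_card_of_mul_eq_zero hAB
    simpa using this
  have h3 : ∀ j : Fin 3, (T j).rank ≤ B.rank := by
    intro j
    rw [← hprj j]
    exact Matrix.rank_mul_le_right _ _
  -- rank of A bounded by sum of block ranks
  have h1 : A.rank ≤ 2 * (T 0).rank + 2 * (T 1).rank + 2 * (T 2).rank := by
    rw [hS]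
    have s1 : (a + b + c + d + e + f).rank ≤
        a.rank + b.rank + c.rank + d.rank + e.rank + f.rank := by
      refine le_trans (mat_rank_add_le _ _) (add_le_add_left ?_ _)
      refine le_trans (mat_rank_add_le _ _) (add_le_add_left ?_ _)
      refine le_trans (mat_rank_add_le _ _) (add_le_add_left ?_ _)
      refine le_trans (mat_rank_add_le _ _) (add_le_add_left ?_ _)
      exact mat_rank_add_le _ _
    have ba : a.rank ≤ (T 2).rank := rank_block_le _ _ _
    have bb : b.rank ≤ (T 1).rank := le_trans (rank_block_le _ _ _) (rank_neg_le _)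
    have bc : c.rank ≤ (T 2).rank := le_trans (rank_block_le _ _ _) (rank_neg_le _)
    have bd : d.rank ≤ (T 0).rank := rank_block_le _ _ _
    have be : e.rank ≤ (T 1).rank := rank_block_le _ _ _
    have bf : f.rank ≤ (T 0).rank := le_trans (rank_block_le _ _ _) (rank_neg_le _)
    omega
  have h30 := h3 0
  have h31 := h3 1
  have h32 := h3 2
  omega
end
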